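/- arXiv:2009.07318 — 8 statements merged into one kernel-verified Lean document; each statement's English description precedes it below -/
import Mathlib

section
/- Let a, b ∈ ℂ with sin(b) ≠ 0. Then the sequence n ↦ cos(a + b·n) does not converge to 0 as n → ∞. -/
open Filter

theorem cos_seq_not_tendsto_zero (a b : ℂ) (hb : Complex.sin b ≠ 0) :
    ¬ Tendsto (fun n : ℕ => Complex.cos (a + b * (n : ℂ))) atTop (nhds 0) := by
  intro h
  have h1 : Tendsto (fun n : ℕ => Complex.cos (a + b * ((n : ℂ) + 1))) atTop (nhds 0) := by
    have := h.comp (tendsto_add_atTop_nat 1)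
    simpa [Function.comp_def, Nat.cast_add] using this
  have h2 : Tendsto (fun n : ℕ => Complex.cos (a + b * ((n : ℂ) + 2))) atTop (nhds 0) := by
    have := h.comp (tendsto_add_atTop_nat 2)
    simpa [Function.comp_def, Nat.cast_add] using this
  have hs : Tendsto (fun n : ℕ => Complex.sin (a + b * ((n : ℂ) + 1))) atTop (nhds 0) := by
    have hd : Tendsto (fun n : ℕ =>
        (Complex.cos (a + b * (n : ℂ)) - Complex.cos (a + b * ((n : ℂ) + 2)))
          / (2 * Complex.sin b)) atTop (nhds 0) := by
      have := (h.sub h2).div_const (2 * Complex.sin b)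
      simpa using this
    have heq : ∀ n : ℕ,
        (Complex.cos (a + b * (n : ℂ)) - Complex.cos (a + b * ((n : ℂ) + 2)))
          / (2 * Complex.sin b) = Complex.sin (a + b * ((n : ℂ) + 1)) := by
      intro n
      rw [Complex.cos_sub_cos]
      have e1 : (a + b * (n : ℂ) + (a + b * ((n : ℂ) + 2))) / 2 = a + b * ((n : ℂ) + 1) := by
        ring
      have e2 : (a + b * (n : ℂ) - (a + b * ((n : ℂ) + 2))) / 2 = -b := by
        ring
      rw [e1, e2, Complex.sin_neg]
      field_simp
    simpa [heq] using hd
  have hone : Tendsto (fun n : ℕ =>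
      Complex.sin (a + b * ((n : ℂ) + 1)) ^ 2 + Complex.cos (a + b * ((n : ℂ) + 1)) ^ 2)
      atTop (nhds 0) := by
    have := (hs.mul hs).add (h1.mul h1)
    simpa [sq] using this
  have : Tendsto (fun _ : ℕ => (1 : ℂ)) atTop (nhds 0) := by
    simp only [Complex.sin_sq_add_cos_sq] at hone; exact hone
  exact zero_ne_one (tendsto_nhds_unique this tendsto_const_nhds)
end

section
/- The complex cotangent cot is a holomorphic bijection from the strip S = {θ ∈ ℂ : 0 < Re θ < π} onto ℂ \ ((−i∞, −i] ∪ [i, i∞)), i.e., the plane minus the two closed imaginary rays {it : t ∈ ℝ, |t| ≥ 1}. -/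
/-- The open strip `0 < Re θ < π`. -/
def stripS : Set ℂ := {θ : ℂ | 0 < θ.re ∧ θ.re < Real.pi}

/-- The plane minus the two closed imaginary rays `{it : t ∈ ℝ, |t| ≥ 1}`. -/
def slitImag : Set ℂ := {w : ℂ | ∃ t : ℝ, 1 ≤ |t| ∧ w = (t : ℂ) * Complex.I}ᶜ

open Complex

lemma int_pi_not_strip {k : ℤ} (h1 : 0 < (k:ℝ) * Real.pi) (h2 : (k:ℝ) * Real.pi < Real.pi) :
    False := by
  have pipos := Real.pi_pos
  have hk1 : (0:ℝ) < k := by nlinarith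
  have hk2 : (k:ℝ) < 1 := by nlinarith
  have h3 : (0:ℤ) < k := by exact_mod_cast hk1
  have h4 : (k:ℤ) < 1 := by exact_mod_cast hk2
  omega

lemma strip_sin_ne {θ : ℂ} (hθ : θ ∈ stripS) : Complex.sin θ ≠ 0 := by
  rw [Complex.sin_ne_zero_iff]
  intro k hk
  obtain ⟨h1, h2⟩ := hθ
  rw [hk] at h1 h2
  simp [Complex.mul_re] at h1 h2
  exact int_pi_not_strip h1 h2

lemma strip_exp_ne_one {θ : ℂ} (hθ : θ ∈ stripS) : Complex.exp (2*Complex.I*θ) ≠ 1 := by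
  intro h
  rw [Complex.exp_eq_one_iff] at h
  obtain ⟨n, hn⟩ := h
  have h2I : (2*Complex.I : ℂ) ≠ 0 := by simp [Complex.I_ne_zero]
  have hθn : θ = (n : ℂ) * (Real.pi : ℂ) := by
    apply mul_left_cancel₀ h2I
    rw [hn]; ring
  obtain ⟨h1, h2⟩ := hθ
  rw [hθn] at h1 h2
  simp [Complex.mul_re] at h1 h2
  exact int_pi_not_strip h1 h2

lemma strip_exp_im_zero {θ : ℂ} (hθ : θ ∈ stripS)
    (h : (Complex.exp (2*Complex.I*θ)).im = 0) : (Complex.exp (2*Complex.I*θ)).re < 0 := by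
  obtain ⟨h1, h2⟩ := hθ
  rw [Complex.exp_im] at h
  rw [Complex.exp_re]
  have hre : (2*Complex.I*θ).im = 2 * θ.re := by simp [Complex.mul_im]
  rw [hre] at h ⊢
  have hepos : 0 < Real.exp (2*Complex.I*θ).re := Real.exp_pos _
  have hsin : Real.sin (2 * θ.re) = 0 := by
    rcases mul_eq_zero.mp h with h' | h'
    · exact absurd h' (ne_of_gt hepos)
    · exact h'
  rw [Real.sin_eq_zero_iff] at hsin
  obtain ⟨k, hk⟩ := hsin
  have pipos := Real.pi_pos
  have hk1 : (0:ℝ) < k * Real.pi := by linarith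
  have hk2 : (k:ℝ) * Real.pi < 2 * Real.pi := by linarith
  have hk1' : (0:ℤ) < k := by
    have : (0:ℝ) < (k:ℝ) := by nlinarith
    exact_mod_cast this
  have hk2' : (k:ℤ) < 2 := by
    have : (k:ℝ) < 2 := by nlinarith
    exact_mod_cast this
  have hk3 : k = 1 := by omega
  rw [hk3] at hk
  simp at hk
  rw [← hk]
  simp [Real.cos_pi]
  exact Real.exp_pos _

lemma strip_diff : DifferentiableOn ℂ Complex.cot stripS := by
  have h : DifferentiableOn ℂ (fun z => Complex.cos z / Complex.sin z) stripS :=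
    DifferentiableOn.div (Complex.differentiable_cos.differentiableOn)
      (Complex.differentiable_sin.differentiableOn) (fun θ hθ => strip_sin_ne hθ)
  exact h.congr (fun z _ => Complex.cot_eq_cos_div_sin z)

lemma strip_inj : Set.InjOn Complex.cot stripS := by
  intro θ₁ h₁ θ₂ h₂ heq
  rw [Complex.cot_eq_exp_ratio, Complex.cot_eq_exp_ratio] at heq
  set z₁ := Complex.exp (2*Complex.I*θ₁) with hz₁
  set z₂ := Complex.exp (2*Complex.I*θ₂) with hz₂
  have hd₁ : Complex.I * (1 - z₁) ≠ 0 :=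
    mul_ne_zero Complex.I_ne_zero (sub_ne_zero.mpr (fun h => strip_exp_ne_one h₁ h.symm))
  have hd₂ : Complex.I * (1 - z₂) ≠ 0 :=
    mul_ne_zero Complex.I_ne_zero (sub_ne_zero.mpr (fun h => strip_exp_ne_one h₂ h.symm))
  have key : (z₁+1) * (Complex.I*(1-z₂)) = (z₂+1) * (Complex.I*(1-z₁)) :=
    (div_eq_div_iff hd₁ hd₂).mp heq
  have hzz : z₁ = z₂ := by
    linear_combination (-Complex.I/2) * key + (z₁ - z₂) * Complex.I_sq
  rw [hz₁, hz₂, Complex.exp_eq_exp_iff_exists_int] at hzz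
  obtain ⟨n, hn⟩ := hzz
  have h2I : (2*Complex.I : ℂ) ≠ 0 := by simp [Complex.I_ne_zero]
  have hθn : θ₁ = θ₂ + (n : ℂ) * (Real.pi : ℂ) := by
    apply mul_left_cancel₀ h2I
    rw [hn]; ring
  have hre : θ₁.re = θ₂.re + (n:ℝ) * Real.pi := by
    rw [hθn]; simp [Complex.add_re, Complex.mul_re]
  obtain ⟨a1, a2⟩ := h₁
  obtain ⟨b1, b2⟩ := h₂
  have pipos := Real.pi_pos
  have hn1 : (-1:ℝ) < n := by nlinarith
  have hn2 : (n:ℝ) < 1 := by nlinarith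
  have hn0 : n = 0 := by
    have i1 : (-1:ℤ) < n := by exact_mod_cast hn1
    have i2 : (n:ℤ) < 1 := by exact_mod_cast hn2
    omega
  rw [hθn, hn0]; simp

lemma strip_maps {θ : ℂ} (hθ : θ ∈ stripS) : Complex.cot θ ∈ slitImag := by
  rintro ⟨t, ht, hw⟩
  rw [Complex.cot_eq_exp_ratio] at hw
  set z := Complex.exp (2*Complex.I*θ) with hz
  have hd : Complex.I * (1 - z) ≠ 0 :=
    mul_ne_zero Complex.I_ne_zero (sub_ne_zero.mpr (fun h => strip_exp_ne_one hθ h.symm))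
  have key : z + 1 = (t:ℂ) * Complex.I * (Complex.I * (1 - z)) := (div_eq_iff hd).mp hw
  have key2 : ((1:ℂ) - (t:ℂ)) * z = -(1 + (t:ℂ)) := by
    linear_combination key + (t:ℂ) * (1 - z) * Complex.I_sq
  have him : (1 - t) * z.im = 0 := by
    have := congrArg Complex.im key2
    simpa [Complex.mul_im] using this
  have hre2 : (1 - t) * z.re = -(1 + t) := by
    have := congrArg Complex.re key2
    simpa [Complex.mul_re] using this
  have ht1 : t ≠ 1 := by
    intro h; rw [h] at hre2; norm_num at hre2
  have hzim : z.im = 0 := by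
    rcases mul_eq_zero.mp him with h | h
    · exact absurd (by linarith : t = 1) ht1
    · exact h
  have hzre : z.re < 0 := strip_exp_im_zero hθ hzim
  rcases le_abs.mp ht with h | h
  · have : 1 < t := lt_of_le_of_ne h (fun h' => ht1 h'.symm)
    nlinarith
  · nlinarith

lemma slit_mem {w : ℂ} (hw : w ∈ slitImag) : ∃ θ ∈ stripS, Complex.cot θ = w := by
  have hwI : w ≠ Complex.I := by
    intro h; exact hw ⟨1, by norm_num, by simp [h]⟩
  have hwmI : w ≠ -Complex.I := by
    intro h; exact hw ⟨-1, by norm_num, by simp [h]⟩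
  have hden : w - Complex.I ≠ 0 := sub_ne_zero.mpr hwI
  obtain ⟨z, hzdef⟩ : ∃ z : ℂ, z = (w + Complex.I) / (w - Complex.I) := ⟨_, rfl⟩
  have hzmul : z * (w - Complex.I) = w + Complex.I := by
    rw [hzdef]; exact div_mul_cancel₀ _ hden
  have hz1 : z ≠ 1 := by
    intro h
    rw [h, one_mul] at hzmul
    have : (2:ℂ) * Complex.I = 0 := by linear_combination -hzmul
    simp [Complex.I_ne_zero] at this
  have hz0 : z ≠ 0 := by
    intro h
    rw [h, zero_mul] at hzmul
    exact hwmI (by linear_combination -hzmul)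
  -- z is not a nonnegative real
  have hznn : ¬(z.im = 0 ∧ 0 ≤ z.re) := by
    rintro ⟨hzim, hzre⟩
    set r := z.re with hr
    have hzr : z = (r : ℝ) := by
      apply Complex.ext <;> simp [hzim, hr]
    have hr1 : r ≠ 1 := by
      intro h; rw [h] at hzr; exact hz1 (by simpa using hzr)
    set t : ℝ := (r+1)/(r-1) with htdef
    have habs : 1 ≤ |t| := by
      rw [htdef, abs_div]
      rw [le_div_iff₀ (abs_pos.mpr (sub_ne_zero.mpr hr1))]
      rw [one_mul]
      exact abs_le_abs (by linarith) (by linarith)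
    refine hw ⟨t, habs, ?_⟩
    -- w = t * I
    rw [hzr] at hzmul
    have hrne : ((r:ℂ) - 1) ≠ 0 := by
      intro h
      exact hr1 (by exact_mod_cast sub_eq_zero.mp h)
    rw [htdef]
    push_cast
    rw [div_mul_eq_mul_div, eq_div_iff hrne]
    linear_combination hzmul
  -- construct θ
  have hzim0 : z.arg ≠ 0 := by
    intro h
    rw [Complex.arg_eq_zero_iff] at h
    exact hznn ⟨h.2, h.1⟩
  set a := z.arg with ha
  set L := Real.log ‖z‖ with hL
  set φ := if 0 < a then a else a + 2*Real.pi with hφ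
  have pipos := Real.pi_pos
  have harg1 := Complex.neg_pi_lt_arg z
  have harg2 := Complex.arg_le_pi z
  have hφ1 : 0 < φ := by
    rw [hφ]; split
    · assumption
    · linarith
  have hφ2 : φ < 2*Real.pi := by
    rw [hφ]; split
    · linarith
    · rename_i h
      push_neg at h
      have : a < 0 := lt_of_le_of_ne h hzim0
      linarith
  set θ : ℂ := (↑(φ/2) : ℂ) + (↑(-(L/2)) : ℂ) * Complex.I with hθdef
  have hθre : θ.re = φ/2 := by simp [hθdef]
  have hθstrip : θ ∈ stripS := by
    constructor <;> rw [hθre] <;> linarith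
  refine ⟨θ, hθstrip, ?_⟩
  have hexp : Complex.exp (2*Complex.I*θ) = z := by
    have h1 : 2*Complex.I*θ = (L:ℂ) + (φ:ℝ) * Complex.I := by
      rw [hθdef]; push_cast
      linear_combination (-(L:ℂ)) * Complex.I_sq
    rw [h1, Complex.exp_add]
    have h2 : Complex.exp ((L:ℂ)) = ((‖z‖ : ℝ) : ℂ) := by
      rw [← Complex.ofReal_exp, hL, Real.exp_log (norm_pos_iff.mpr hz0)]
    rw [h2]
    rw [hφ]
    split
    · push_cast
      exact Complex.norm_mul_exp_arg_mul_I z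
    · push_cast
      rw [add_mul, Complex.exp_add]
      have h3 : Complex.exp (2*(Real.pi:ℂ)*Complex.I) = 1 := Complex.exp_two_pi_mul_I
      rw [h3, mul_one]
      exact Complex.norm_mul_exp_arg_mul_I z
  rw [Complex.cot_eq_exp_ratio, hexp]
  have hdz : Complex.I * (1 - z) ≠ 0 :=
    mul_ne_zero Complex.I_ne_zero (sub_ne_zero.mpr (fun h => hz1 h.symm))
  rw [div_eq_iff hdz]
  -- z + 1 = w * (I * (1 - z)), with z*(w-I) = w+I
  linear_combination Complex.I * hzmul + (z+1) * Complex.I_sq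

theorem cot_conformal_strip :
    DifferentiableOn ℂ Complex.cot stripS ∧
    Set.InjOn Complex.cot stripS ∧
    Complex.cot '' stripS = slitImag := by
  refine ⟨strip_diff, strip_inj, ?_⟩
  ext w
  constructor
  · rintro ⟨θ, hθ, rfl⟩
    exact strip_maps hθ
  · intro hw
    obtain ⟨θ, h1, h2⟩ := slit_mem hw
    exact ⟨θ, h1, h2⟩
end

section
/- Define w₁₃(x) = (−x + i√(1−x²))/(2i√(1−x²)) for x ∈ D₁ = ℂ \ ((−∞,−1] ∪ [1,∞)), using the principal square root (note 1−x² ∉ (−∞,0] on D₁). Then w₁₃ is a conformal map from D₁ onto ℂ \ ((−∞,0] ∪ [1,∞)). -/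
/-- The doubly slit plane `ℂ \ ((−∞,−1] ∪ [1,∞))`. -/
def domD1 : Set ℂ := {z : ℂ | z.im = 0 ∧ (z.re ≤ -1 ∨ 1 ≤ z.re)}ᶜ

/-- Principal square root of `1 - x²`. -/
noncomputable def sqrt1mx2 (x : ℂ) : ℂ := (1 - x ^ 2) ^ ((1 : ℂ) / 2)

/-- The map `w₁₃`. -/
noncomputable def w13 (x : ℂ) : ℂ :=
  (-x + Complex.I * sqrt1mx2 x) / (2 * Complex.I * sqrt1mx2 x)

open Complex

noncomputable def gmap (x : ℂ) : ℂ := x / (1 - x ^ 2) ^ ((1 : ℂ) / 2)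
noncomputable def hmap (y : ℂ) : ℂ := y / (1 + y ^ 2) ^ ((1 : ℂ) / 2)

lemma inv_mem_slitPlane' {z : ℂ} (hz : z ∈ slitPlane) : z⁻¹ ∈ slitPlane := by
  rw [mem_slitPlane_iff] at hz ⊢
  have hz0 : z ≠ 0 := by rintro rfl; simp at hz
  have hn : 0 < Complex.normSq z := normSq_pos.2 hz0
  rw [inv_re, inv_im]
  rcases hz with h | h
  · exact Or.inl (div_pos h hn)
  · right
    simp only [ne_eq, neg_div, neg_eq_zero, div_eq_zero_iff, not_or]
    exact ⟨h, hn.ne'⟩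

lemma sq_sqrt' (z : ℂ) : (z ^ ((1:ℂ)/2)) ^ 2 = z := by
  have := Complex.cpow_nat_inv_pow z (n := 2) (by norm_num)
  rw [one_div]; exact_mod_cast this

lemma sqrt_ne_zero' {z : ℂ} (hz : z ≠ 0) : z ^ ((1:ℂ)/2) ≠ 0 := by
  intro h
  have := sq_sqrt' z
  rw [h] at this; simp at this; exact hz this.symm

lemma sqrt_inv' {z : ℂ} (hz : z ∈ slitPlane) : (z⁻¹) ^ ((1:ℂ)/2) = (z ^ ((1:ℂ)/2))⁻¹ :=
  Complex.inv_cpow z _ (slitPlane_arg_ne_pi hz)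

lemma one_add_g_sq {x : ℂ} (hx : 1 - x ^ 2 ∈ slitPlane) : 1 + gmap x ^ 2 = (1 - x ^ 2)⁻¹ := by
  have h0 : (1 - x ^ 2) ≠ 0 := slitPlane_ne_zero hx
  have hs : (1 - x^2) ^ ((1:ℂ)/2) ≠ 0 := sqrt_ne_zero' h0
  rw [gmap, div_pow, sq_sqrt']
  field_simp
  ring

lemma one_add_g_sq_mem {x : ℂ} (hx : 1 - x ^ 2 ∈ slitPlane) : 1 + gmap x ^ 2 ∈ slitPlane := by
  rw [one_add_g_sq hx]; exact inv_mem_slitPlane' hx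

lemma hmap_gmap {x : ℂ} (hx : 1 - x ^ 2 ∈ slitPlane) : hmap (gmap x) = x := by
  have h0 : (1 - x ^ 2) ≠ 0 := slitPlane_ne_zero hx
  have hs : (1 - x^2) ^ ((1:ℂ)/2) ≠ 0 := sqrt_ne_zero' h0
  rw [hmap, one_add_g_sq hx, sqrt_inv' hx, gmap, div_inv_eq_mul, div_mul_cancel₀ _ hs]

lemma one_sub_h_sq {y : ℂ} (hy : 1 + y ^ 2 ∈ slitPlane) : 1 - hmap y ^ 2 = (1 + y ^ 2)⁻¹ := by
  have h0 : (1 + y ^ 2) ≠ 0 := slitPlane_ne_zero hy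
  have hs : (1 + y^2) ^ ((1:ℂ)/2) ≠ 0 := sqrt_ne_zero' h0
  rw [hmap, div_pow, sq_sqrt']
  field_simp
  ring

lemma one_sub_h_sq_mem {y : ℂ} (hy : 1 + y ^ 2 ∈ slitPlane) : 1 - hmap y ^ 2 ∈ slitPlane := by
  rw [one_sub_h_sq hy]; exact inv_mem_slitPlane' hy

lemma gmap_hmap {y : ℂ} (hy : 1 + y ^ 2 ∈ slitPlane) : gmap (hmap y) = y := by
  have h0 : (1 + y ^ 2) ≠ 0 := slitPlane_ne_zero hy
  have hs : (1 + y^2) ^ ((1:ℂ)/2) ≠ 0 := sqrt_ne_zero' h0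
  rw [gmap, one_sub_h_sq hy, sqrt_inv' hy, hmap, div_inv_eq_mul, div_mul_cancel₀ _ hs]


lemma real_iff_D1 (a b : ℝ) :
    ¬(b = 0 ∧ (a ≤ -1 ∨ 1 ≤ a)) ↔ (0 < 1 - (a * a - b * b) ∨ 0 - (a * b + b * a) ≠ 0) := by
  constructor
  · intro h
    by_cases hb0 : b = 0
    · left
      subst hb0
      have h1 : ¬(a ≤ -1 ∨ 1 ≤ a) := fun hc => h ⟨rfl, hc⟩
      push_neg at h1
      nlinarith [h1.1, h1.2]
    · by_cases ha0 : a = 0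
      · left; subst ha0; nlinarith [sq_nonneg b, mul_self_nonneg b]
      · right
        intro hc
        have : a * b = 0 := by linarith
        rcases mul_eq_zero.1 this with h1 | h1
        · exact ha0 h1
        · exact hb0 h1
  · rintro h ⟨rfl, hab⟩
    rcases h with h | h
    · rcases hab with h1 | h1 <;> nlinarith
    · simp at h

lemma real_iff_target (u v : ℝ) :
    ¬(v = 0 ∧ (u ≤ 0 ∨ 1 ≤ u)) ↔
      (0 < 4 * (u - (u * u - v * v)) ∨ 4 * (v - (u * v + v * u)) ≠ 0) := by
  constructor
  · intro h
    by_cases hv0 : v = 0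
    · left
      subst hv0
      have h1 : ¬(u ≤ 0 ∨ 1 ≤ u) := fun hc => h ⟨rfl, hc⟩
      push_neg at h1
      nlinarith [h1.1, h1.2]
    · by_cases hu : u * v + v * u = v
      · left
        have : u = 1/2 := by
          have h2 : v * (2 * u - 1) = 0 := by linarith
          rcases mul_eq_zero.1 h2 with h3 | h3
          · exact absurd h3 hv0
          · linarith
        subst this
        nlinarith [mul_self_pos.2 hv0]
      · right
        intro hc
        exact hu (by linarith)
  · rintro h ⟨rfl, hab⟩
    rcases h with h | h
    · rcases hab with h1 | h1 <;> nlinarith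
    · simp at h

lemma mem_domD1_iff' {z : ℂ} :
    ¬(z.im = 0 ∧ (z.re ≤ -1 ∨ 1 ≤ z.re)) ↔ 1 - z ^ 2 ∈ slitPlane := by
  rw [real_iff_D1 z.re z.im]
  simp only [mem_slitPlane_iff, Complex.sub_re, Complex.sub_im, Complex.one_re, Complex.one_im,
    pow_two, Complex.mul_re, Complex.mul_im]

lemma mem_target_iff' {w : ℂ} :
    ¬(w.im = 0 ∧ (w.re ≤ 0 ∨ 1 ≤ w.re)) ↔
      1 + (Complex.I * (1 - 2 * w)) ^ 2 ∈ slitPlane := by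
  have key : 1 + (Complex.I * (1 - 2 * w)) ^ 2 = 4 * (w - w ^ 2) := by
    have : (Complex.I : ℂ) ^ 2 = -1 := Complex.I_sq
    ring_nf
    rw [this]
    ring
  rw [key, real_iff_target w.re w.im]
  simp only [mem_slitPlane_iff, Complex.mul_re, Complex.mul_im, Complex.sub_re, Complex.sub_im,
    pow_two, Complex.re_ofNat, Complex.im_ofNat]
  constructor <;> intro h <;> rcases h with h | h
  · left; linarith
  · right; intro hc; apply h; linarith
  · left; linarith
  · right; intro hc; apply h; linarith


lemma mem_domD1 {z : ℂ} : z ∈ domD1 ↔ 1 - z ^ 2 ∈ slitPlane := by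
  rw [domD1, Set.mem_compl_iff, Set.mem_setOf_eq]
  exact mem_domD1_iff'

lemma w13_eq {x : ℂ} (hx : 1 - x ^ 2 ∈ slitPlane) :
    w13 x = 1 / 2 + Complex.I * gmap x / 2 := by
  have h0 : (1 - x ^ 2) ≠ 0 := slitPlane_ne_zero hx
  have hs : (1 - x ^ 2) ^ ((1:ℂ)/2) ≠ 0 := sqrt_ne_zero' h0
  rw [w13, gmap, sqrt1mx2]
  rw [div_eq_iff (by simp [Complex.I_ne_zero, h0])]
  field_simp
  ring_nf
  linear_combination (-x) * Complex.I_sq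

lemma psi_w13 {x : ℂ} (hx : 1 - x ^ 2 ∈ slitPlane) :
    Complex.I * (1 - 2 * w13 x) = gmap x := by
  rw [w13_eq hx]
  linear_combination (-(gmap x)) * Complex.I_sq

theorem w13_conformal :
    DifferentiableOn ℂ w13 domD1 ∧
    Set.InjOn w13 domD1 ∧
    w13 '' domD1 = {w : ℂ | w.im = 0 ∧ (w.re ≤ 0 ∨ 1 ≤ w.re)}ᶜ := by
  have left_inv : ∀ x ∈ domD1, hmap (Complex.I * (1 - 2 * w13 x)) = x := by
    intro x hx
    have hsx := mem_domD1.1 hx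
    rw [psi_w13 hsx, hmap_gmap hsx]
  refine ⟨?_, ?_, ?_⟩
  · intro x hx
    have hsx := mem_domD1.1 hx
    have h0 : (1 - x ^ 2) ≠ 0 := slitPlane_ne_zero hsx
    have hs : (1 - x ^ 2) ^ ((1:ℂ)/2) ≠ 0 := sqrt_ne_zero' h0
    have hd : HasDerivAt (fun y : ℂ => 1 - y ^ 2) (-(2 * x)) x := by
      simpa using (hasDerivAt_pow 2 x).const_sub 1
    have hsq : DifferentiableAt ℂ (fun y : ℂ => (1 - y ^ 2) ^ ((1:ℂ)/2)) x :=
      (hd.cpow_const hsx).differentiableAt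
    have : DifferentiableAt ℂ w13 x := by
      unfold w13 sqrt1mx2
      exact ((differentiableAt_id.neg).add ((differentiableAt_const _).mul hsq)).div
        ((differentiableAt_const _).mul hsq) (by simp [Complex.I_ne_zero, h0])
    exact this.differentiableWithinAt
  · intro a ha b hb hab
    rw [← left_inv a ha, ← left_inv b hb, hab]
  · ext w
    simp only [Set.mem_image, Set.mem_compl_iff, Set.mem_setOf_eq]
    constructor
    · rintro ⟨x, hx, rfl⟩
      have hsx := mem_domD1.1 hx
      apply mem_target_iff'.2
      rw [psi_w13 hsx]
      exact one_add_g_sq_mem hsx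
    · intro hw
      have hy : 1 + (Complex.I * (1 - 2 * w)) ^ 2 ∈ slitPlane := mem_target_iff'.1 hw
      refine ⟨hmap (Complex.I * (1 - 2 * w)), mem_domD1.2 (one_sub_h_sq_mem hy), ?_⟩
      rw [w13_eq (one_sub_h_sq_mem hy), gmap_hmap hy]
      linear_combination ((1 - 2 * w) / 2) * Complex.I_sq
end

section
/- Define w₁₄(x) = (x − i√(1−x²))/(x + i√(1−x²)) for x ∈ D₁ = ℂ \ ((−∞,−1] ∪ [1,∞)), using the principal square root. Then w₁₄ is a conformal map from D₁ onto ℂ \ [0, ∞). -/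
/-- The map `w₁₄`. -/
noncomputable def w14 (x : ℂ) : ℂ :=
  (x - Complex.I * sqrt1mx2 x) / (x + Complex.I * sqrt1mx2 x)

lemma sq_sqrt1mx2 (x : ℂ) : (sqrt1mx2 x) ^ 2 = 1 - x ^ 2 := by
  have := Complex.cpow_nat_inv_pow (1 - x ^ 2) (n := 2) (by norm_num)
  simpa [sqrt1mx2, one_div] using this

lemma slit_mem_s10 {x : ℂ} (hx : x ∈ domD1) : (1 - x ^ 2) ∈ Complex.slitPlane := by
  rw [Complex.mem_slitPlane_iff]
  by_contra h
  push_neg at h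
  simp only [domD1, Set.mem_compl_iff, Set.mem_setOf_eq] at hx
  push_neg at hx
  have hre : (1 - x ^ 2).re = 1 - (x.re ^ 2 - x.im ^ 2) := by
    simp only [Complex.sub_re, Complex.one_re, pow_two, Complex.mul_re]; try ring
  have him : (1 - x ^ 2).im = -(2 * x.re * x.im) := by
    simp only [Complex.sub_im, Complex.one_im, pow_two, Complex.mul_im]; try ring
  obtain ⟨h1, h2⟩ := h
  rw [hre] at h1; rw [him] at h2
  have hab : x.re * x.im = 0 := by linarith [h2]
  rcases mul_eq_zero.1 hab with ha | hb
  · nlinarith [sq_nonneg x.im]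
  · have := hx hb
    nlinarith [this.1, this.2]

lemma re_sqrt_gt {x : ℂ} (hx : x ∈ domD1) : |x.im| < (sqrt1mx2 x).re := by
  have hre : (sqrt1mx2 x).re =
      Real.sqrt ((‖1 - x ^ 2‖ + (1 - x ^ 2).re) / 2) := by
    rw [sqrt1mx2, one_div, show ((2 : ℂ))⁻¹ = ((2⁻¹ : ℂ)) from rfl,
      Complex.cpow_inv_two_re]
  rw [hre]
  set a := x.re; set b := x.im
  have hzre : (1 - x ^ 2).re = 1 - a ^ 2 + b ^ 2 := by
    simp only [Complex.sub_re, Complex.one_re, pow_two, Complex.mul_re]; try ring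
  have hzim : (1 - x ^ 2).im = -(2 * a * b) := by
    simp only [Complex.sub_im, Complex.one_im, pow_two, Complex.mul_im]; try ring
  have habs : (‖1 - x ^ 2‖) ^ 2 = (a ^ 2 + b ^ 2 - 1) ^ 2 + 4 * b ^ 2 := by
    rw [Complex.sq_norm, Complex.normSq_apply, hzre, hzim]; ring
  have habsnn : 0 ≤ ‖1 - x ^ 2‖ := norm_nonneg _
  have key : a ^ 2 + b ^ 2 - 1 < ‖1 - x ^ 2‖ := by
    rcases eq_or_ne b 0 with hb | hb
    · simp only [domD1, Set.mem_compl_iff, Set.mem_setOf_eq] at hx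
      push_neg at hx
      have := hx hb
      nlinarith [this.1, this.2]
    · have hb2 : 0 < b ^ 2 := by positivity
      by_contra hcon
      push_neg at hcon
      nlinarith [habs, habsnn, hb2, mul_le_mul hcon hcon habsnn (le_trans habsnn hcon)]
  rw [hzre]
  rw [← Real.sqrt_sq (abs_nonneg b)]
  apply Real.sqrt_lt_sqrt (sq_nonneg _)
  rw [sq_abs]
  nlinarith [key]

lemma prod_one (x : ℂ) :
    (x + Complex.I * sqrt1mx2 x) * (x - Complex.I * sqrt1mx2 x) = 1 := by
  linear_combination sq_sqrt1mx2 x - (sqrt1mx2 x) ^ 2 * Complex.I_sq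

lemma denom_ne (x : ℂ) : x + Complex.I * sqrt1mx2 x ≠ 0 :=
  left_ne_zero_of_mul_eq_one (prod_one x)

lemma w14_eq_sq (x : ℂ) : w14 x = (x - Complex.I * sqrt1mx2 x) ^ 2 := by
  rw [w14, div_eq_iff (denom_ne x)]
  linear_combination (-(x - Complex.I * sqrt1mx2 x)) * prod_one x

lemma im_u_neg {x : ℂ} (hx : x ∈ domD1) : (x - Complex.I * sqrt1mx2 x).im < 0 := by
  have h := re_sqrt_gt hx
  have : (x - Complex.I * sqrt1mx2 x).im = x.im - (sqrt1mx2 x).re := by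
    simp [Complex.sub_im, Complex.mul_im]
  rw [this]
  linarith [le_abs_self x.im]

lemma w14_injOn : Set.InjOn w14 domD1 := by
  intro x hx y hy h
  have hsq : (x - Complex.I * sqrt1mx2 x) ^ 2 = (y - Complex.I * sqrt1mx2 y) ^ 2 := by
    rw [← w14_eq_sq, ← w14_eq_sq, h]
  have hui := im_u_neg hx
  have hvi := im_u_neg hy
  have hprod : ((x - Complex.I * sqrt1mx2 x) - (y - Complex.I * sqrt1mx2 y)) *
      ((x - Complex.I * sqrt1mx2 x) + (y - Complex.I * sqrt1mx2 y)) = 0 := by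
    linear_combination hsq
  rcases mul_eq_zero.1 hprod with h0 | h0
  · have huv := sub_eq_zero.mp h0
    have hune : (x - Complex.I * sqrt1mx2 x) ≠ 0 := by
      intro h'; rw [h'] at hui; simp at hui
    have hx2 : (x + Complex.I * sqrt1mx2 x) = (y + Complex.I * sqrt1mx2 y) := by
      apply mul_right_cancel₀ hune
      rw [prod_one x, huv, prod_one y]
    linear_combination (hx2 + huv) / 2
  · exfalso
    have h1 : ((x - Complex.I * sqrt1mx2 x) + (y - Complex.I * sqrt1mx2 y)).im = 0 := by
      rw [h0]; simp
    rw [Complex.add_im] at h1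
    linarith

lemma w14_notin {x : ℂ} (hx : x ∈ domD1) : w14 x ∉ {w : ℂ | w.im = 0 ∧ 0 ≤ w.re} := by
  rintro ⟨h1, h2⟩
  have hui := im_u_neg hx
  rw [w14_eq_sq] at h1 h2
  rw [pow_two, Complex.mul_im] at h1
  rw [pow_two, Complex.mul_re] at h2
  have hre : (x - Complex.I * sqrt1mx2 x).re = 0 := by
    rcases mul_eq_zero.1 (show (x - Complex.I * sqrt1mx2 x).re *
        (x - Complex.I * sqrt1mx2 x).im = 0 by linarith) with h | h
    · exact h
    · exact absurd h (ne_of_lt hui)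
  rw [hre] at h2
  nlinarith

lemma w14_of_u {u : ℂ} (hu : u.im < 0) :
    (u + u⁻¹) / 2 ∈ domD1 ∧ w14 ((u + u⁻¹) / 2) = u ^ 2 := by
  have hune : u ≠ 0 := by intro h; rw [h] at hu; simp at hu
  have hnsq : 0 < Complex.normSq u := Complex.normSq_pos.2 hune
  have hxim : ((u + u⁻¹) / 2).im = (u.im - u.im / Complex.normSq u) / 2 := by
    rw [show ((2 : ℂ)) = ((2 : ℝ) : ℂ) by norm_num, Complex.div_ofReal_im,
      Complex.add_im, Complex.inv_im]
    ring
  have hxre : ((u + u⁻¹) / 2).re = (u.re + u.re / Complex.normSq u) / 2 := by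
    rw [show ((2 : ℂ)) = ((2 : ℝ) : ℂ) by norm_num, Complex.div_ofReal_re,
      Complex.add_re, Complex.inv_re]
    try ring
  have hmem : (u + u⁻¹) / 2 ∈ domD1 := by
    simp only [domD1, Set.mem_compl_iff, Set.mem_setOf_eq]
    rintro ⟨h1, h2⟩
    rw [hxim] at h1
    have hnsq1 : Complex.normSq u = 1 := by
      have : u.im * (Complex.normSq u - 1) = 0 := by
        field_simp at h1
        nlinarith [h1]
      rcases mul_eq_zero.1 this with h | h
      · exact absurd h (ne_of_lt hu)
      · linarith [sub_eq_zero.mp h]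
    have hre : ((u + u⁻¹) / 2).re = u.re := by rw [hxre, hnsq1]; ring
    have hsum : u.re * u.re + u.im * u.im = 1 := by
      have := hnsq1; rw [Complex.normSq_apply] at this; linarith
    rw [hre] at h2
    rcases h2 with h | h <;> nlinarith
  refine ⟨hmem, ?_⟩
  have hid : (Complex.I * (u - u⁻¹) / 2) ^ 2 = 1 - ((u + u⁻¹) / 2) ^ 2 := by
    have hinv : u * u⁻¹ = 1 := mul_inv_cancel₀ hune
    linear_combination ((u - u⁻¹) ^ 2 / 4) * Complex.I_sq + hinv
  have hfac : (sqrt1mx2 ((u + u⁻¹) / 2) - Complex.I * (u - u⁻¹) / 2) *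
      (sqrt1mx2 ((u + u⁻¹) / 2) + Complex.I * (u - u⁻¹) / 2) = 0 := by
    linear_combination sq_sqrt1mx2 ((u + u⁻¹) / 2) - hid
  have hres : 0 < (sqrt1mx2 ((u + u⁻¹) / 2)).re :=
    lt_of_le_of_lt (abs_nonneg _) (re_sqrt_gt hmem)
  have htre : 0 < (Complex.I * (u - u⁻¹) / 2).re := by
    rw [show ((2 : ℂ)) = ((2 : ℝ) : ℂ) by norm_num, Complex.div_ofReal_re,
      Complex.mul_re, Complex.I_re, Complex.I_im, Complex.sub_im, Complex.inv_im]
    have : u.im - -u.im / Complex.normSq u < 0 := by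
      rw [neg_div, sub_neg_eq_add]
      have : u.im / Complex.normSq u < 0 := div_neg_of_neg_of_pos hu hnsq
      linarith
    simp only [zero_mul, one_mul, zero_sub]
    nlinarith [this]
  have hseq : sqrt1mx2 ((u + u⁻¹) / 2) = Complex.I * (u - u⁻¹) / 2 := by
    rcases mul_eq_zero.1 hfac with h | h
    · exact sub_eq_zero.mp h
    · exfalso
      have := congrArg Complex.re h
      rw [Complex.add_re, Complex.zero_re] at this
      linarith
  have hxms : (u + u⁻¹) / 2 - Complex.I * sqrt1mx2 ((u + u⁻¹) / 2) = u := by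
    rw [hseq]
    linear_combination (-(u - u⁻¹) / 2) * Complex.I_sq
  have hxps : (u + u⁻¹) / 2 + Complex.I * sqrt1mx2 ((u + u⁻¹) / 2) = u⁻¹ := by
    rw [hseq]
    linear_combination ((u - u⁻¹) / 2) * Complex.I_sq
  rw [w14, hxms, hxps, div_eq_mul_inv, inv_inv, ← pow_two]

lemma w14_surj {w : ℂ} (hw : w ∉ {w : ℂ | w.im = 0 ∧ 0 ≤ w.re}) :
    ∃ x ∈ domD1, w14 x = w := by
  simp only [Set.mem_setOf_eq, not_and, not_le] at hw
  have hr2 : (w ^ ((1 : ℂ) / 2)) ^ 2 = w := by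
    have := Complex.cpow_nat_inv_pow w (n := 2) (by norm_num)
    simpa [one_div] using this
  have hrim : (w ^ ((1 : ℂ) / 2)).im ≠ 0 := by
    intro h0
    have h1 : w.im = 0 := by
      rw [← hr2, pow_two, Complex.mul_im, h0]; ring
    have h2 : 0 ≤ w.re := by
      rw [← hr2, pow_two, Complex.mul_re, h0]
      nlinarith [sq_nonneg (w ^ ((1 : ℂ) / 2)).re]
    exact absurd (hw h1) (not_lt.2 h2)
  obtain ⟨u, hu2, huim⟩ : ∃ u : ℂ, u ^ 2 = w ∧ u.im < 0 := by
    rcases lt_or_gt_of_ne hrim with h | h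
    · exact ⟨_, hr2, h⟩
    · refine ⟨-(w ^ ((1 : ℂ) / 2)), by rw [neg_pow]; simp [hr2],
        by rw [Complex.neg_im]; linarith⟩
  obtain ⟨hmem, heq⟩ := w14_of_u huim
  exact ⟨_, hmem, by rw [heq, hu2]⟩

lemma w14_diff : DifferentiableOn ℂ w14 domD1 := by
  intro x hx
  apply DifferentiableAt.differentiableWithinAt
  have hs : DifferentiableAt ℂ sqrt1mx2 x := by
    apply DifferentiableAt.cpow
    · exact (differentiableAt_const (1 : ℂ)).sub (differentiableAt_id.pow 2)
    · exact differentiableAt_const _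
    · exact slit_mem_s10 hx
  exact DifferentiableAt.div
    (differentiableAt_id.sub ((differentiableAt_const Complex.I).mul hs))
    (differentiableAt_id.add ((differentiableAt_const Complex.I).mul hs))
    (denom_ne x)

theorem w14_conformal :
    DifferentiableOn ℂ w14 domD1 ∧
    Set.InjOn w14 domD1 ∧
    w14 '' domD1 = {w : ℂ | w.im = 0 ∧ 0 ≤ w.re}ᶜ := by
  refine ⟨w14_diff, w14_injOn, ?_⟩
  ext w
  constructor
  · rintro ⟨x, hx, rfl⟩
    exact w14_notin hx
  · intro hw
    obtain ⟨x, hx, hxe⟩ := w14_surj hw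
    exact ⟨x, hx, hxe⟩
end

section
/- For x ∈ D₁ = ℂ \ ((−∞,−1] ∪ [1,∞)), writing x = cos θ with θ = α + iβ, α ∈ (0,π), β ∈ ℝ, one has (x − i√(1−x²))/(x + i√(1−x²)) = e^{−2iθ}; in particular its modulus equals e^{2β}, and it is strictly less than 1 if and only if Im x > 0. -/
lemma sqrt_sq_of_re_pos {z : ℂ} (hz : 0 < z.re) : (z ^ 2) ^ ((1 : ℂ) / 2) = z := by
  have h1 : ((1 : ℂ) / 2) = ((2 : ℕ) : ℂ)⁻¹ := by norm_num
  set w : ℂ := (z ^ 2) ^ ((1 : ℂ) / 2) with hw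
  have hsq : w ^ 2 = z ^ 2 := by
    rw [hw, h1]; exact Complex.cpow_nat_inv_pow _ two_ne_zero
  have hre : 0 ≤ w.re := by
    rw [hw, h1]
    have := Complex.cpow_inv_two_re (z ^ 2)
    rw [show ((2 : ℕ) : ℂ)⁻¹ = (2⁻¹ : ℂ) by norm_num]
    rw [this]
    exact Real.sqrt_nonneg _
  have hz2 : (w - z) * (w + z) = 0 := by linear_combination hsq
  rcases mul_eq_zero.mp hz2 with h | h
  · exact sub_eq_zero.mp h
  · exfalso
    have hwz : w = -z := eq_neg_of_add_eq_zero_left h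
    rw [hwz, Complex.neg_re] at hre
    linarith

theorem w14_eq_exp (α β : ℝ) (hα0 : 0 < α) (hαπ : α < Real.pi) :
    let θ : ℂ := (α : ℂ) + (β : ℂ) * Complex.I
    let x : ℂ := Complex.cos θ
    let w : ℂ := (x - Complex.I * sqrt1mx2 x) / (x + Complex.I * sqrt1mx2 x)
    w = Complex.exp (-2 * Complex.I * θ) ∧
    ‖w‖ = Real.exp (2 * β) ∧
    (‖w‖ < 1 ↔ 0 < x.im) := by
  intro θ x w
  have hsinα : 0 < Real.sin α := Real.sin_pos_of_pos_of_lt_pi hα0 hαπ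
  -- real part of sin θ is positive
  have hsin_eq : Complex.sin θ =
      (Real.sin α : ℂ) * (Real.cosh β : ℂ) + (Real.cos α : ℂ) * (Real.sinh β : ℂ) * Complex.I := by
    rw [show θ = (α : ℂ) + (β : ℂ) * Complex.I from rfl, Complex.sin_add_mul_I]
    simp [Complex.ofReal_sin, Complex.ofReal_cos, Complex.ofReal_cosh, Complex.ofReal_sinh]
  have hre : 0 < (Complex.sin θ).re := by
    rw [hsin_eq]
    simp only [Complex.add_re, Complex.mul_re, Complex.mul_im, Complex.ofReal_re,
      Complex.ofReal_im, Complex.I_re, Complex.I_im]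
    ring_nf
    positivity
  -- sqrt1mx2 (cos θ) = sin θ
  have hsqrt : sqrt1mx2 x = Complex.sin θ := by
    have h1 : 1 - x ^ 2 = Complex.sin θ ^ 2 := by
      have := Complex.sin_sq_add_cos_sq θ
      linear_combination -this
    rw [sqrt1mx2, h1, sqrt_sq_of_re_pos hre]
  have hx : x = Complex.cos θ := rfl
  have hnum : x - Complex.I * sqrt1mx2 x = Complex.exp (-θ * Complex.I) := by
    rw [hsqrt, hx, Complex.exp_mul_I, Complex.cos_neg, Complex.sin_neg]; ring
  have hden : x + Complex.I * sqrt1mx2 x = Complex.exp (θ * Complex.I) := by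
    rw [hsqrt, hx, Complex.exp_mul_I]; ring
  have hw : w = Complex.exp (-2 * Complex.I * θ) := by
    show (x - Complex.I * sqrt1mx2 x) / (x + Complex.I * sqrt1mx2 x) = _
    rw [hnum, hden, ← Complex.exp_sub]
    ring_nf
  refine ⟨hw, ?_, ?_⟩
  · rw [hw]
    rw [show ‖Complex.exp (-2 * Complex.I * θ)‖ = Real.exp ((-2 * Complex.I * θ).re) from
      Complex.norm_exp _]
    congr 1
    simp [θ, Complex.mul_re, Complex.mul_im]
  · have hnorm : ‖w‖ = Real.exp (2 * β) := by
      rw [hw, show ‖Complex.exp (-2 * Complex.I * θ)‖ = Real.exp ((-2 * Complex.I * θ).re) from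
        Complex.norm_exp _]
      congr 1
      simp [θ, Complex.mul_re, Complex.mul_im]
    rw [hnorm]
    have him : x.im = -(Real.sin α * Real.sinh β) := by
      have hcos_eq : Complex.cos θ =
          (Real.cos α : ℂ) * (Real.cosh β : ℂ) - (Real.sin α : ℂ) * (Real.sinh β : ℂ) * Complex.I := by
        rw [show θ = (α : ℂ) + (β : ℂ) * Complex.I from rfl, Complex.cos_add_mul_I]
        simp [Complex.ofReal_sin, Complex.ofReal_cos, Complex.ofReal_cosh, Complex.ofReal_sinh]
      rw [hx, hcos_eq]
      simp [Complex.sub_im, Complex.mul_im, Complex.mul_re, ← Complex.ofReal_sin,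
        ← Complex.ofReal_sinh]
    constructor
    · intro h
      have h2 : 2 * β < 0 := by
        by_contra hc
        push_neg at hc
        have := Real.one_le_exp (by linarith : (0:ℝ) ≤ 2 * β)
        linarith
      have hβ : β < 0 := by linarith
      rw [him]
      have : Real.sinh β < 0 := Real.sinh_neg_iff.mpr hβ
      nlinarith
    · intro h
      rw [him] at h
      have hs : Real.sinh β < 0 := by nlinarith
      have hβ : β < 0 := by
        by_contra hc
        push_neg at hc
        have : ¬ Real.sinh β < 0 := by
          simpa using not_lt.mpr (Real.sinh_le_sinh.mpr hc |>.trans_eq' Real.sinh_zero)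
        exact this hs
      calc Real.exp (2 * β) < Real.exp 0 := Real.exp_lt_exp.mpr (by linarith)
        _ = 1 := Real.exp_zero
end

section
/- Let a, b ∈ ℂ. Then Γ(a + z)/Γ(b + z) ~ z^{a−b} as z → +∞ along the positive reals; consequently, for fixed ν, μ ∈ ℂ, the coefficient c_k = (Γ(ν+μ+k+1)/Γ(ν+k+3/2))·((μ+1/2)_k / k!) satisfies c_k ~ k^{2μ−1}/Γ(μ+1/2) as k → ∞ (when 1/Γ(μ+1/2) ≠ 0). -/
open Filter MeasureTheory Set Complex Real

lemma GR_approx_tendsto (a c : ℂ) (hc : 0 < c.re) :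
    Tendsto (fun z : ℝ => ∫ x : ℝ in (0)..z,
        ((1 - x / z : ℝ) : ℂ) ^ (a + z - 1) * (x : ℂ) ^ (c - 1)) atTop
      (nhds (Complex.Gamma c)) := by
  rw [Complex.Gamma_eq_integral hc]
  let f : ℝ → ℝ → ℂ := fun z =>
    indicator (Ioc 0 z) fun x : ℝ => ((1 - x / z : ℝ) : ℂ) ^ (a + z - 1) * (x : ℂ) ^ (c - 1)
  have f_meas : ∀ z : ℝ, AEStronglyMeasurable (f z) (volume.restrict (Ioi 0)) := by
    intro z
    refine (Measurable.indicator ?_ measurableSet_Ioc).aestronglyMeasurable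
    exact ((Complex.measurable_ofReal.comp
      ((measurable_const.sub (measurable_id.div_const z)))).pow measurable_const).mul
      ((Complex.measurable_ofReal).pow measurable_const)
  have f_tends : ∀ x : ℝ, x ∈ Ioi (0 : ℝ) →
      Tendsto (fun z : ℝ => f z x) atTop (nhds <| ↑(Real.exp (-x)) * (x : ℂ) ^ (c - 1)) := by
    intro x hx
    rw [mem_Ioi] at hx
    apply Tendsto.congr'
    · show ∀ᶠ z : ℝ in atTop, ((1 - x / z : ℝ) : ℂ) ^ (a + z - 1) * (x : ℂ) ^ (c - 1) = f z x
      filter_upwards [eventually_ge_atTop x] with z hz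
      dsimp only [f]
      rw [indicator_of_mem (mem_Ioc.mpr ⟨hx, hz⟩)]
    · refine Tendsto.mul_const _ ?_
      have h0 : ∀ᶠ z : ℝ in atTop, ((1 - x / z : ℝ) : ℂ) ^ (a + z - 1)
          = Complex.exp ((a - 1) * ↑(Real.log (1 - x / z)) + ↑(z * Real.log (1 - x / z))) := by
        filter_upwards [eventually_gt_atTop x] with z hz
        have h1 : (0:ℝ) < 1 - x / z := by
          rw [sub_pos]; exact (div_lt_one (hx.trans hz)).mpr hz
        rw [Complex.cpow_def_of_ne_zero (by exact_mod_cast h1.ne')]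
        rw [← Complex.ofReal_log h1.le]
        push_cast
        ring_nf
      rw [show ((Real.exp (-x) : ℝ) : ℂ) = Complex.exp ((a - 1) * (0:ℂ) + ((-x : ℝ) : ℂ)) by
        push_cast; simp [Complex.ofReal_exp]]
      refine Tendsto.congr' (EventuallyEq.symm h0) ?_
      refine (Complex.continuous_exp.tendsto _).comp (Tendsto.add ?_ ?_)
      · refine Tendsto.const_mul _ ?_
        have : Tendsto (fun z : ℝ => Real.log (1 - x / z)) atTop (nhds 0) := by
          rw [show (0:ℝ) = Real.log 1 by simp]
          refine (Real.continuousAt_log (by norm_num)).tendsto.comp ?_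
          simpa using tendsto_const_nhds.sub (Tendsto.div_atTop (tendsto_const_nhds (x := x)) tendsto_id)
        exact (Complex.continuous_ofReal.tendsto _).comp this
      · refine (Complex.continuous_ofReal.tendsto _).comp ?_
        have := Real.tendsto_mul_log_one_add_div_atTop (-x)
        refine this.congr fun z => ?_
        rw [neg_div, ← sub_eq_add_neg]
  have bound_int : Integrable (fun x : ℝ => x ^ (c.re - 1) * Real.exp (-(2:ℝ)⁻¹ * x))
      (volume.restrict (Ioi 0)) := by
    have := integrableOn_rpow_mul_exp_neg_mul_rpow (p := 1)
      (by linarith : (-1:ℝ) < c.re - 1) zero_lt_one (by norm_num : (0:ℝ) < 2⁻¹)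
    simpa [Real.rpow_one, IntegrableOn] using this
  have hbound : ∀ᶠ z : ℝ in atTop, ∀ᵐ x ∂(volume.restrict (Ioi 0)),
      ‖f z x‖ ≤ x ^ (c.re - 1) * Real.exp (-(2:ℝ)⁻¹ * x) := by
    filter_upwards [eventually_ge_atTop (max 1 (2 - 2 * a.re))] with z hz
    have hz1 : (1:ℝ) ≤ z := le_trans (le_max_left _ _) hz
    have hz0 : (0:ℝ) < z := lt_of_lt_of_le one_pos hz1
    have hw : z / 2 ≤ a.re + z - 1 := by
      have := le_trans (le_max_right _ _) hz; linarith
    have hw0 : 0 < a.re + z - 1 := lt_of_lt_of_le (by linarith) hw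
    rw [ae_restrict_iff' measurableSet_Ioi]
    filter_upwards with x hx
    rw [mem_Ioi] at hx
    dsimp only [f]
    rcases lt_or_ge z x with hxz | hxz
    · rw [indicator_of_notMem (notMem_Ioc_of_gt hxz), norm_zero]
      positivity
    · rw [indicator_of_mem (mem_Ioc.mpr ⟨hx, hxz⟩), norm_mul]
      have h1 : (0:ℝ) ≤ 1 - x / z := by
        rw [sub_nonneg]; exact (div_le_one hz0).mpr hxz
      have e1 : ‖((1 - x / z : ℝ) : ℂ) ^ (a + (z:ℂ) - 1)‖ = (1 - x / z) ^ (a.re + z - 1) := by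
        rw [Complex.norm_cpow_eq_rpow_re_of_nonneg h1 (by
          simp only [Complex.sub_re, Complex.add_re, Complex.ofReal_re, Complex.one_re]
          exact hw0.ne')]
        congr 1
      have e2 : ‖(x:ℂ) ^ (c - 1)‖ = x ^ (c.re - 1) := by
        rw [Complex.norm_cpow_eq_rpow_re_of_pos hx]
        congr 1
      rw [e1, e2, mul_comm]
      have hkey : (1 - x / z) ^ (a.re + z - 1) ≤ Real.exp (-(2:ℝ)⁻¹ * x) := by
        calc (1 - x / z) ^ (a.re + z - 1)
            ≤ (Real.exp (-(x / z))) ^ (a.re + z - 1) := by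
              apply Real.rpow_le_rpow h1 _ hw0.le
              linarith [Real.add_one_le_exp (-(x / z))]
          _ = Real.exp (-(x / z) * (a.re + z - 1)) := (Real.exp_mul _ _).symm
          _ ≤ Real.exp (-(2:ℝ)⁻¹ * x) := by
              apply Real.exp_le_exp.mpr
              have h2 : x / z * (z / 2) ≤ x / z * (a.re + z - 1) :=
                mul_le_mul_of_nonneg_left hw (by positivity)
              have h3 : x / z * (z / 2) = x / 2 := by
                field_simp
              nlinarith
      have hx' : (0:ℝ) ≤ x ^ (c.re - 1) := Real.rpow_nonneg hx.le _
      exact mul_le_mul_of_nonneg_left hkey hx'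
  have key := MeasureTheory.tendsto_integral_filter_of_dominated_convergence
      (μ := volume.restrict (Ioi 0)) (F := f)
      (f := fun x : ℝ => ↑(Real.exp (-x)) * (x:ℂ) ^ (c - 1))
      (bound := fun x : ℝ => x ^ (c.re - 1) * Real.exp (-(2:ℝ)⁻¹ * x))
      (Eventually.of_forall f_meas) hbound bound_int
      ((ae_restrict_iff' measurableSet_Ioi).mpr (ae_of_all _ f_tends))
  refine key.congr' ?_
  filter_upwards [eventually_ge_atTop (0:ℝ)] with z hz
  dsimp only [f]
  rw [MeasureTheory.integral_indicator measurableSet_Ioc,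
    Measure.restrict_restrict_of_subset Ioc_subset_Ioi_self,
    intervalIntegral.integral_of_le hz]

lemma GR_ratio_eq (a c : ℂ) (hc : 0 < c.re) {z : ℝ} (hz : 0 < z) (hza : 0 < (a + (z:ℂ)).re) :
    Complex.Gamma (a + z) / Complex.Gamma (a + c + z) * (z : ℂ) ^ c
      = (∫ x : ℝ in (0)..z, ((1 - x / z : ℝ) : ℂ) ^ (a + z - 1) * (x : ℂ) ^ (c - 1)) /
        Complex.Gamma c := by
  have hzc : (z:ℂ) ≠ 0 := Complex.ofReal_ne_zero.mpr hz.ne'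
  set u : ℂ := a + (z:ℂ) with hu
  have hGuc : Complex.Gamma (u + c) ≠ 0 := Complex.Gamma_ne_zero_of_re_pos (by
    rw [Complex.add_re]; linarith)
  have hGc : Complex.Gamma c ≠ 0 := Complex.Gamma_ne_zero_of_re_pos hc
  have hbeta := Complex.Gamma_mul_Gamma_eq_betaIntegral hza hc
  have husum : a + c + (z:ℂ) = u + c := by rw [hu]; ring
  rw [husum]
  have h1 : Complex.Gamma u / Complex.Gamma (u + c)
      = Complex.betaIntegral u c / Complex.Gamma c := by
    rw [div_eq_div_iff hGuc hGc, hbeta]; ring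
  rw [h1, Complex.betaIntegral_symm, div_mul_eq_mul_div]
  congr 1
  have hsub := intervalIntegral.integral_comp_div (a := 0) (b := z)
      (f := fun x : ℝ => ((x:ℝ):ℂ) ^ (c - 1) * (1 - (x:ℂ)) ^ (u - 1)) hz.ne'
  rw [zero_div, div_self hz.ne'] at hsub
  calc Complex.betaIntegral c u * (z:ℂ) ^ c
      = (z:ℂ) ^ (c - 1) * ((z:ℝ) • Complex.betaIntegral c u) := by
        rw [Complex.real_smul,
          show (z:ℂ) ^ c = (z:ℂ) ^ (c - 1) * (z:ℂ) by
            conv_lhs => rw [show c = c - 1 + 1 by ring]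
            rw [Complex.cpow_add _ _ hzc, Complex.cpow_one]]
        ring
    _ = (z:ℂ) ^ (c - 1) *
        ∫ x in (0:ℝ)..z, ((x / z : ℝ):ℂ) ^ (c - 1) * (1 - ((x / z : ℝ):ℂ)) ^ (u - 1) := by
        rw [Complex.betaIntegral, ← hsub]
    _ = ∫ x in (0:ℝ)..z, ((1 - x / z : ℝ) : ℂ) ^ (u - 1) * (x:ℂ) ^ (c - 1) := by
        rw [← intervalIntegral.integral_const_mul]
        rw [intervalIntegral.integral_of_le hz.le, intervalIntegral.integral_of_le hz.le]
        refine setIntegral_congr_fun measurableSet_Ioc fun x hx => ?_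
        obtain ⟨hx0, hxz⟩ := hx
        have e1 : ((x / z : ℝ) : ℂ) ^ (c - 1) = (x:ℂ) ^ (c - 1) * ((z:ℂ) ^ (c - 1))⁻¹ := by
          rw [div_eq_mul_inv, Complex.ofReal_mul, Complex.mul_cpow_ofReal_nonneg hx0.le (inv_nonneg.mpr hz.le),
            Complex.ofReal_inv, Complex.inv_cpow _ _ (by
              rw [Complex.arg_ofReal_of_nonneg hz.le]; exact Ne.symm Real.pi_ne_zero)]
        have hz1 : (z:ℂ) ^ (c - 1) ≠ 0 := by
          simp [Complex.cpow_eq_zero_iff, hzc]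
        have e2 : (1 - ((x / z : ℝ):ℂ)) = ((1 - x / z : ℝ) : ℂ) := by push_cast; ring
        rw [e1, e2]
        field_simp

lemma GR_base (a c : ℂ) (hc : 0 < c.re) :
    Tendsto (fun z : ℝ =>
      Complex.Gamma (a + z) / Complex.Gamma (a + c + z) / (z:ℂ) ^ (a - (a + c)))
      atTop (nhds 1) := by
  have hGc : Complex.Gamma c ≠ 0 := Complex.Gamma_ne_zero_of_re_pos hc
  have h := (GR_approx_tendsto a c hc).div_const (Complex.Gamma c)
  rw [div_self hGc] at h
  refine h.congr' ?_
  filter_upwards [eventually_gt_atTop (0:ℝ), eventually_gt_atTop (-a.re)] with z hz hza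
  have hre : 0 < (a + (z:ℂ)).re := by
    simp only [Complex.add_re, Complex.ofReal_re]; linarith
  rw [← GR_ratio_eq a c hc hz hre, show a - (a + c) = -c by ring, Complex.cpow_neg, div_eq_mul_inv _ (((z:ℂ) ^ c)⁻¹), inv_inv]

lemma GR_swap (a b : ℂ)
    (h : Tendsto (fun z : ℝ =>
      Complex.Gamma (b + z) / Complex.Gamma (a + z) / (z:ℂ) ^ (b - a)) atTop (nhds 1)) :
    Tendsto (fun z : ℝ =>
      Complex.Gamma (a + z) / Complex.Gamma (b + z) / (z:ℂ) ^ (a - b)) atTop (nhds 1) := by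
  have h2 := h.inv₀ one_ne_zero
  rw [inv_one] at h2
  refine h2.congr' ?_
  filter_upwards [eventually_gt_atTop (0:ℝ), eventually_gt_atTop (-a.re),
    eventually_gt_atTop (-b.re)] with z hz hza hzb
  have hGa : Complex.Gamma (a + z) ≠ 0 := Complex.Gamma_ne_zero_of_re_pos (by
    simp only [Complex.add_re, Complex.ofReal_re]; linarith)
  have hGb : Complex.Gamma (b + z) ≠ 0 := Complex.Gamma_ne_zero_of_re_pos (by
    simp only [Complex.add_re, Complex.ofReal_re]; linarith)
  have hzc : (z:ℂ) ≠ 0 := Complex.ofReal_ne_zero.mpr hz.ne'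
  have hzp : (z:ℂ) ^ (b - a) ≠ 0 := by
    simp [Complex.cpow_eq_zero_iff, hzc]
  rw [show a - b = -(b - a) by ring, Complex.cpow_neg]
  field_simp

lemma GR_shift (a b : ℂ)
    (h : Tendsto (fun z : ℝ =>
      Complex.Gamma ((a + 1) + z) / Complex.Gamma (b + z) / (z:ℂ) ^ ((a + 1) - b))
      atTop (nhds 1)) :
    Tendsto (fun z : ℝ =>
      Complex.Gamma (a + z) / Complex.Gamma (b + z) / (z:ℂ) ^ (a - b)) atTop (nhds 1) := by
  have hq : Tendsto (fun z : ℝ => (a + (z:ℂ)) / (z:ℂ)) atTop (nhds 1) := by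
    have h0 : Tendsto (fun z : ℝ => ((z⁻¹ : ℝ) : ℂ)) atTop (nhds 0) := by
      have := (Complex.continuous_ofReal.tendsto 0).comp tendsto_inv_atTop_zero
      simpa [Function.comp_def] using this
    have h1 : Tendsto (fun z : ℝ => ((z⁻¹ : ℝ) : ℂ) * a + 1) atTop (nhds 1) := by
      simpa using (h0.mul_const a).add_const 1
    refine h1.congr' ?_
    filter_upwards [eventually_gt_atTop (0:ℝ)] with z hz
    have hzc : (z:ℂ) ≠ 0 := Complex.ofReal_ne_zero.mpr hz.ne'
    push_cast
    field_simp
  have hinv : Tendsto (fun z : ℝ => (z:ℂ) / (a + (z:ℂ))) atTop (nhds 1) := by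
    have := hq.inv₀ one_ne_zero
    rw [inv_one] at this
    refine this.congr ?_
    intro z
    rw [inv_div]
  have := h.mul hinv
  rw [mul_one] at this
  refine this.congr' ?_
  filter_upwards [eventually_gt_atTop (0:ℝ), eventually_gt_atTop (-a.re),
    eventually_gt_atTop (-b.re)] with z hz hza hzb
  have hzc : (z:ℂ) ≠ 0 := Complex.ofReal_ne_zero.mpr hz.ne'
  have haz : a + (z:ℂ) ≠ 0 := by
    intro h0
    have := congrArg Complex.re h0
    simp only [Complex.add_re, Complex.ofReal_re, Complex.zero_re] at this
    linarith
  have hGb : Complex.Gamma (b + z) ≠ 0 := Complex.Gamma_ne_zero_of_re_pos (by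
    simp only [Complex.add_re, Complex.ofReal_re]; linarith)
  have hzp : (z:ℂ) ^ (a - b) ≠ 0 := by
    simp [Complex.cpow_eq_zero_iff, hzc]
  have hg1 : Complex.Gamma (a + 1 + z) = (a + z) * Complex.Gamma (a + z) := by
    rw [show a + 1 + (z:ℂ) = (a + z) + 1 by ring, Complex.Gamma_add_one _ haz]
  have he : (z:ℂ) ^ (a + 1 - b) = (z:ℂ) ^ (a - b) * (z:ℂ) := by
    rw [show a + 1 - b = (a - b) + 1 by ring, Complex.cpow_add _ _ hzc, Complex.cpow_one]
  rw [hg1, he]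
  field_simp

lemma GR_shift_n (n : ℕ) : ∀ a b : ℂ,
    Tendsto (fun z : ℝ =>
      Complex.Gamma ((a + n) + z) / Complex.Gamma (b + z) / (z:ℂ) ^ ((a + n) - b))
      atTop (nhds 1) →
    Tendsto (fun z : ℝ =>
      Complex.Gamma (a + z) / Complex.Gamma (b + z) / (z:ℂ) ^ (a - b)) atTop (nhds 1) := by
  induction n with
  | zero => intro a b h; simpa using h
  | succ n ih =>
      intro a b h
      apply GR_shift a b
      apply ih (a + 1) b
      have e : a + 1 + (n:ℂ) = a + ((n + 1 : ℕ) : ℂ) := by push_cast; ring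
      rw [e]
      exact h

lemma GR_main (a b : ℂ) :
    Tendsto (fun z : ℝ =>
      Complex.Gamma (a + z) / Complex.Gamma (b + z) / (z:ℂ) ^ (a - b)) atTop (nhds 1) := by
  obtain ⟨n, hn⟩ := exists_nat_gt (b - a).re
  apply GR_shift_n n a b
  apply GR_swap
  have hc : 0 < ((a + n) - b).re := by
    simp only [Complex.sub_re, Complex.add_re, Complex.natCast_re]
    have : (b - a).re = b.re - a.re := by simp [Complex.sub_re]
    linarith
  have := GR_base b (a + n - b) hc
  rw [show b + ((a:ℂ) + n - b) = a + n by ring] at this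
  exact this

theorem gamma_ratio_asymptotics (a b : ℂ) (ν μ : ℂ) (hμ : 1 / Complex.Gamma (μ + 1 / 2) ≠ 0) :
    Tendsto (fun z : ℝ =>
      Complex.Gamma (a + z) / Complex.Gamma (b + z) / (z : ℂ) ^ (a - b)) atTop (nhds 1) ∧
    Tendsto (fun k : ℕ =>
      (Complex.Gamma (ν + μ + k + 1) / Complex.Gamma (ν + k + 3 / 2) *
        (Complex.Gamma (μ + 1 / 2 + k) / Complex.Gamma (μ + 1 / 2) / (Nat.factorial k : ℂ))) /
      ((k : ℂ) ^ (2 * μ - 1) / Complex.Gamma (μ + 1 / 2))) atTop (nhds 1) := by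
  have hGμ : Complex.Gamma (μ + 1 / 2) ≠ 0 := by
    intro h0; rw [h0] at hμ; simp at hμ
  refine ⟨GR_main a b, ?_⟩
  have hA := (GR_main (ν + μ + 1) (ν + 3 / 2)).comp
    (tendsto_natCast_atTop_atTop (R := ℝ))
  have hB := (GR_main (μ + 1 / 2) 1).comp (tendsto_natCast_atTop_atTop (R := ℝ))
  have hAB := hA.mul hB
  rw [mul_one] at hAB
  refine hAB.congr' ?_
  filter_upwards [eventually_ge_atTop 1, eventually_gt_atTop ⌈-ν.re⌉₊] with k hk1 hkν
  have hkR : (0:ℝ) < k := by exact_mod_cast hk1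
  have hkc : (k:ℂ) ≠ 0 := Nat.cast_ne_zero.mpr (by omega)
  have hkν' : -ν.re < (k:ℝ) := lt_of_le_of_lt (Nat.le_ceil _) (by exact_mod_cast hkν)
  simp only [Function.comp]
  push_cast
  have hGν : Complex.Gamma (ν + 3 / 2 + (k:ℂ)) ≠ 0 := Complex.Gamma_ne_zero_of_re_pos (by
    simp only [Complex.add_re, Complex.natCast_re, Complex.div_re]
    norm_num
    linarith)
  have hfac : Complex.Gamma (1 + (k:ℂ)) = (Nat.factorial k : ℂ) := by
    rw [add_comm, Complex.Gamma_nat_eq_factorial]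
  have hcp : (k:ℂ) ^ (2 * μ - 1)
      = (k:ℂ) ^ (ν + μ + 1 - (ν + 3 / 2)) * (k:ℂ) ^ (μ + 1 / 2 - 1) := by
    rw [← Complex.cpow_add _ _ hkc]
    congr 1
    ring
  have hp1 : (k:ℂ) ^ (ν + μ + 1 - (ν + 3 / 2)) ≠ 0 := by
    simp [Complex.cpow_eq_zero_iff, hkc]
  have hp2 : (k:ℂ) ^ (μ + 1 / 2 - 1) ≠ 0 := by
    simp [Complex.cpow_eq_zero_iff, hkc]
  have hfacne : (Nat.factorial k : ℂ) ≠ 0 := Nat.cast_ne_zero.mpr (Nat.factorial_ne_zero k)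
  have e1 : ν + μ + 1 + (k:ℂ) = ν + μ + k + 1 := by ring
  have e2 : ν + 3 / 2 + (k:ℂ) = ν + k + 3 / 2 := by ring
  rw [e1, hfac, hcp] at *
  rw [e2] at hGν ⊢
  field_simp
  ring_nf
  rw [mul_assoc _ (Complex.Gamma (1 / 2 + μ)) (Complex.Gamma (1 / 2 + μ))⁻¹, mul_inv_cancel₀ (show Complex.Gamma (1 / 2 + μ) ≠ 0 by rwa [add_comm]), mul_one]
end

section
/- Let θ ∈ (0, π) with θ ≠ π/2, and ν, μ ∈ ℂ with ν + μ ∉ −ℕ and Re μ ≥ 1/2. Then the series ∑_{k=0}^∞ (Γ(ν+μ+k+1)/Γ(ν+k+3/2))·((μ+1/2)_k/k!)·cos((ν+μ+2k+1)θ) diverges, i.e., its terms do not tend to 0. -/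
open Filter Finset

private lemma ne_neg_nat_of_re_pos {z : ℂ} (hz : 0 < z.re) : ∀ n : ℕ, z ≠ -n := by
  intro n h
  have : z.re = -n := by rw [h]; simp
  have : (0:ℝ) < -(n:ℝ) := this ▸ hz
  have h2 : (n:ℝ) < 0 := by linarith
  have h3 : (0:ℝ) ≤ n := Nat.cast_nonneg n
  linarith

private lemma gamma_add_nat {z : ℂ} (hz : ∀ n : ℕ, z ≠ -n) (k : ℕ) :
    Complex.Gamma (z + k) = Complex.Gamma z * ∏ j ∈ range k, (z + j) := by
  induction k with
  | zero => simp
  | succ k ih =>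
    have h0 : z + k ≠ 0 := by
      intro h
      exact hz k (by linear_combination h)
    have : z + ((k : ℕ) + 1 : ℕ) = (z + k) + 1 := by push_cast; ring
    rw [this, Complex.Gamma_add_one _ h0, ih, Finset.prod_range_succ]
    ring

private lemma prod_ne_zero {z : ℂ} (hz : ∀ n : ℕ, z ≠ -n) (k : ℕ) :
    ∏ j ∈ range k, (z + (j:ℕ)) ≠ 0 := by
  refine Finset.prod_ne_zero_iff.mpr fun j _ h => hz j (by linear_combination h)

private lemma cos_not_tendsto (α : ℂ) (β : ℝ) (hβ : Real.sin β ≠ 0) :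
    ¬ Tendsto (fun k : ℕ => Complex.cos (α + k * (β:ℂ))) atTop (nhds 0) := by
  intro h
  have hsβ : Complex.sin (β:ℂ) ≠ 0 := by
    rw [← Complex.ofReal_sin]
    exact_mod_cast hβ
  have h1 : Tendsto (fun k : ℕ => Complex.cos (α + ((k:ℂ)+1) * (β:ℂ))) atTop (nhds 0) := by
    have := h.comp (tendsto_add_atTop_nat 1)
    refine this.congr fun k => ?_
    simp only [Function.comp]
    push_cast
    ring_nf
  have hsin : Tendsto (fun k : ℕ => Complex.sin (α + k * (β:ℂ))) atTop (nhds 0) := by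
    have h2 : Tendsto (fun k : ℕ =>
        (Complex.cos (α + k * (β:ℂ)) * Complex.cos (β:ℂ)
          - Complex.cos (α + ((k:ℂ)+1) * (β:ℂ))) / Complex.sin (β:ℂ)) atTop (nhds 0) := by
      have := ((h.mul_const (Complex.cos (β:ℂ))).sub h1).div_const (Complex.sin (β:ℂ))
      simpa using this
    refine h2.congr fun k => ?_
    have hval : Complex.cos (α + ((k:ℂ)+1) * (β:ℂ)) = Complex.cos (α + k * (β:ℂ)) * Complex.cos (β:ℂ)
        - Complex.sin (α + k * (β:ℂ)) * Complex.sin (β:ℂ) := by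
      rw [show α + ((k:ℂ)+1) * (β:ℂ) = (α + k * (β:ℂ)) + β from by ring, Complex.cos_add]
    rw [hval]
    field_simp
    ring
  have hone : Tendsto (fun k : ℕ =>
      Complex.sin (α + k * (β:ℂ)) ^ 2 + Complex.cos (α + k * (β:ℂ)) ^ 2) atTop (nhds 0) := by
    have := (hsin.mul hsin).add (h.mul h)
    simpa [sq] using this
  have : Tendsto (fun _ : ℕ => (1:ℂ)) atTop (nhds 0) := by
    refine hone.congr fun k => ?_
    exact Complex.sin_sq_add_cos_sq _
  exact zero_ne_one (tendsto_nhds_unique this tendsto_const_nhds)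

private lemma real_calc {K L q x : ℝ} (hK : K ≠ 0) (hL : L ≠ 0) :
    K * q * x * (2/(K*L)) = q * (2/L) * x := by
  field_simp

private lemma one_le_aux {L q : ℝ} (hL : 0 < L) (h : L/2 ≤ q) : 1 ≤ q * (2/L) := by
  rw [mul_div_assoc', le_div_iff₀ hL]
  linarith

set_option maxHeartbeats 1000000 in
theorem fourier_series_diverges (θ : ℝ) (hθ0 : 0 < θ) (hθπ : θ < Real.pi)
    (hθ : θ ≠ Real.pi / 2) (ν μ : ℂ) (hνμ : ∀ n : ℕ, ν + μ ≠ -(n + 1 : ℂ))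
    (hμ : (1 : ℝ) / 2 ≤ μ.re) :
    ¬ Tendsto (fun k : ℕ =>
      Complex.Gamma (ν + μ + k + 1) / Complex.Gamma (ν + k + 3 / 2) *
        (Complex.Gamma (μ + 1 / 2 + k) / Complex.Gamma (μ + 1 / 2) / (Nat.factorial k : ℂ)) *
        Complex.cos ((ν + μ + 2 * k + 1) * (θ : ℂ))) atTop (nhds 0) := by
  intro hT
  set f : ℕ → ℂ := fun k : ℕ =>
      Complex.Gamma (ν + μ + k + 1) / Complex.Gamma (ν + k + 3 / 2) *
        (Complex.Gamma (μ + 1 / 2 + k) / Complex.Gamma (μ + 1 / 2) / (Nat.factorial k : ℂ)) *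
        Complex.cos ((ν + μ + 2 * k + 1) * (θ : ℂ)) with hf
  obtain ⟨m, hm⟩ := exists_nat_gt (|(ν.re)| + 2)
  have habs : |ν.re| + 2 ≤ m := le_of_lt hm
  set A : ℂ := ν + μ + 1 + m with hAdef
  set B : ℂ := μ + 1/2 + m with hBdef
  set C : ℂ := ν + 3/2 + m with hCdef
  set D : ℂ := (m:ℂ) + 1 with hDdef
  set b : ℂ := μ + 1/2 with hbdef
  have hA : ∀ n : ℕ, A ≠ -n := by
    intro n h
    apply hνμ (n + m)
    push_cast
    linear_combination h
  have hBre : 0 < B.re := by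
    have : B.re = μ.re + 1/2 + m := by simp [hBdef, hbdef]; try norm_num; try ring_nf
    rw [this]
    have : (0:ℝ) ≤ m := Nat.cast_nonneg m
    linarith
  have hbre : 0 < b.re := by
    have : b.re = μ.re + 1/2 := by simp [hbdef]; try norm_num; try ring_nf
    rw [this]; linarith
  have hCre : 0 < C.re := by
    have : C.re = ν.re + 3/2 + m := by simp [hCdef]
    rw [this]
    have h1 : -|ν.re| ≤ ν.re := neg_abs_le _
    linarith
  have hDre : 0 < D.re := by
    have : D.re = m + 1 := by simp [hDdef]
    rw [this]; positivity
  have hB := ne_neg_nat_of_re_pos hBre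
  have hb := ne_neg_nat_of_re_pos hbre
  have hC := ne_neg_nat_of_re_pos hCre
  have hD := ne_neg_nat_of_re_pos hDre
  -- gamma values nonzero
  have hGA := Complex.Gamma_ne_zero hA
  have hGB := Complex.Gamma_ne_zero hB
  have hGC := Complex.Gamma_ne_zero hC
  have hGb := Complex.Gamma_ne_zero hb
  have hGD := Complex.Gamma_ne_zero hD
  set P : ℂ → ℕ → ℂ := fun z k => ∏ j ∈ range k, (z + (j:ℕ)) with hP
  set K : ℂ := Complex.Gamma A * Complex.Gamma B /
      (Complex.Gamma C * Complex.Gamma b * (Nat.factorial m : ℂ)) with hK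
  have hfact : ((Nat.factorial m : ℕ) : ℂ) ≠ 0 := by
    exact_mod_cast Nat.factorial_ne_zero m
  have hKne : K ≠ 0 := by
    rw [hK]
    apply div_ne_zero (mul_ne_zero hGA hGB)
    exact mul_ne_zero (mul_ne_zero hGC hGb) hfact
  set Q : ℕ → ℂ := fun k => P A k * P B k / (P C k * P D k) with hQ
  -- key pointwise identity
  have hterm : ∀ k : ℕ, f (m + k) = K * Q k * Complex.cos ((A + m + 2*k) * (θ:ℂ)) := by
    intro k
    have e1 : ν + μ + ((m + k : ℕ):ℂ) + 1 = A + k := by push_cast [hAdef]; ring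
    have e2 : ν + ((m + k : ℕ):ℂ) + 3/2 = C + k := by push_cast [hCdef]; ring
    have e3 : b + ((m + k : ℕ):ℂ) = B + k := by push_cast [hBdef]; ring
    have e4 : ν + μ + 2*((m + k : ℕ):ℂ) + 1 = A + m + 2*k := by push_cast [hAdef]; ring
    have efact : ((Nat.factorial (m + k) : ℕ) : ℂ) = (Nat.factorial m : ℂ) * P D k := by
      have : ((Nat.factorial (m + k) : ℕ) : ℂ) = Complex.Gamma (D + k) := by
        rw [show D + (k:ℂ) = ((m+k : ℕ):ℂ) + 1 by push_cast [hDdef]; ring,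
          Complex.Gamma_nat_eq_factorial]
      rw [this, gamma_add_nat hD, show Complex.Gamma D = (Nat.factorial m : ℂ) by
        rw [hDdef, Complex.Gamma_nat_eq_factorial]]
    simp only [hf, e1, e2, e3, e4, efact]
    rw [gamma_add_nat hA, gamma_add_nat hB, gamma_add_nat hC]
    have hPC := prod_ne_zero hC k
    have hPD := prod_ne_zero hD k
    rw [hK, hQ]
    simp only [hP] at *
    field_simp
  -- GammaSeq relation
  set G := Complex.GammaSeq with hG
  set L : ℂ := Complex.Gamma C * Complex.Gamma D / (Complex.Gamma A * Complex.Gamma B) with hL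
  have hLne : L ≠ 0 := div_ne_zero (mul_ne_zero hGC hGD) (mul_ne_zero hGA hGB)
  set R : ℕ → ℂ := fun n => G C n * G D n / (G A n * G B n) with hR
  have hRlim : Tendsto R atTop (nhds L) := by
    rw [hR, hL]
    exact ((Complex.GammaSeq_tendsto_Gamma C).mul (Complex.GammaSeq_tendsto_Gamma D)).div
      ((Complex.GammaSeq_tendsto_Gamma A).mul (Complex.GammaSeq_tendsto_Gamma B))
      (mul_ne_zero hGA hGB)
  -- Q (n+1) = n ^ (2μ-1) * R n for n ≥ 1
  have hQeq : ∀ n : ℕ, 1 ≤ n → Q (n+1) = (n:ℂ) ^ ((2:ℂ)*μ - 1) * R n := by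
    intro n hn
    have hn0 : (n:ℂ) ≠ 0 := Nat.cast_ne_zero.mpr (by omega)
    have hnf : ((Nat.factorial n : ℕ):ℂ) ≠ 0 := by exact_mod_cast Nat.factorial_ne_zero n
    have hpowne : ∀ z : ℂ, (n:ℂ) ^ z ≠ 0 := fun z => by
      simp [Complex.cpow_eq_zero_iff, hn0]
    have hpow : (n:ℂ) ^ A * (n:ℂ) ^ B = (n:ℂ) ^ ((2:ℂ)*μ - 1) * ((n:ℂ) ^ C * (n:ℂ) ^ D) := by
      rw [← Complex.cpow_add _ _ hn0, ← Complex.cpow_add _ _ hn0, ← Complex.cpow_add _ _ hn0]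
      congr 1
      rw [hAdef, hBdef, hCdef, hDdef]; ring
    have hPA := prod_ne_zero hA (n+1)
    have hPB := prod_ne_zero hB (n+1)
    have hPC := prod_ne_zero hC (n+1)
    have hPD := prod_ne_zero hD (n+1)
    have hGmul : G A n * G B n * Q (n+1) = (n:ℂ) ^ ((2:ℂ)*μ - 1) * (G C n * G D n) := by
      rw [hQ, hG]
      simp only [Complex.GammaSeq]
      simp only [hP] at *
      field_simp
      ring_nf
      ring_nf at hpow
      linear_combination hpow
    have hGAne : G A n ≠ 0 := by
      rw [hG]
      simp only [Complex.GammaSeq]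
      exact div_ne_zero (mul_ne_zero (hpowne A) hnf) (by simpa [hP] using hPA)
    have hGBne : G B n ≠ 0 := by
      rw [hG]
      simp only [Complex.GammaSeq]
      exact div_ne_zero (mul_ne_zero (hpowne B) hnf) (by simpa [hP] using hPB)
    show Q (n+1) = (n:ℂ) ^ ((2:ℂ)*μ - 1) * (G C n * G D n / (G A n * G B n))
    rw [mul_div_assoc']
    rw [eq_div_iff (mul_ne_zero hGAne hGBne)]
    linear_combination hGmul
  -- sin (2θ) ≠ 0
  have hπ := Real.pi_pos
  have hsin2 : Real.sin (2*θ) ≠ 0 := by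
    rw [Real.sin_ne_zero_iff]
    intro n h
    have h1 : 0 < (n:ℝ) * Real.pi := by rw [h]; linarith
    have h2 : (n:ℝ) * Real.pi < 2 * Real.pi := by rw [h]; linarith
    have hn0 : 0 < n := by
      by_contra hn
      push_neg at hn
      have : (n:ℝ) ≤ 0 := by exact_mod_cast hn
      nlinarith
    have hn2 : n < 2 := by
      by_contra hn
      push_neg at hn
      have : (2:ℝ) ≤ n := by exact_mod_cast hn
      nlinarith
    have hn1 : n = 1 := by omega
    rw [hn1] at h
    apply hθ
    push_cast at h
    linarith
  have hLpos : 0 < ‖L‖ := norm_pos_iff.mpr hLne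
  have hKpos : 0 < ‖K‖ := norm_pos_iff.mpr hKne
  have hRev : ∀ᶠ n in atTop, ‖L‖/2 < ‖R n‖ :=
    hRlim.norm.eventually (eventually_gt_nhds (by linarith))
  set α : ℂ := (A + m + 2) * (θ:ℂ) with hα
  have hcos : Tendsto (fun n : ℕ => Complex.cos (α + n * ((2*θ:ℝ):ℂ))) atTop (nhds 0) := by
    have hT2 : Tendsto (fun n : ℕ => ‖f (n + (m+1))‖ * (2 / (‖K‖ * ‖L‖))) atTop (nhds 0) := by
      have h0 : Tendsto (fun n : ℕ => ‖f (n + (m+1))‖) atTop (nhds 0) := by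
        have := (hT.comp (tendsto_add_atTop_nat (m+1))).norm
        simpa [Function.comp] using this
      simpa using h0.mul_const (2 / (‖K‖ * ‖L‖))
    apply squeeze_zero_norm' _ hT2
    filter_upwards [hRev, eventually_ge_atTop 1] with n hRn hn1
    have hidx : m + (n+1) = n + (m+1) := by omega
    have ht := hterm (n+1)
    rw [hidx] at ht
    have harg : (A + (m:ℂ) + 2*((n:ℕ)+1:ℕ)) * (θ:ℂ) = α + n * ((2*θ:ℝ):ℂ) := by
      rw [hα]; push_cast; ring
    rw [harg] at ht
    -- norm computations
    have hQn : ‖L‖/2 ≤ ‖Q (n+1)‖ := by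
      rw [hQeq n hn1, norm_mul]
      have hnpow : (1:ℝ) ≤ ‖(n:ℂ) ^ ((2:ℂ)*μ - 1)‖ := by
        have hn0 : (0:ℝ) < n := by exact_mod_cast hn1
        rw [show ((n:ℕ):ℂ) = (((n:ℕ):ℝ):ℂ) by push_cast; rfl,
          Complex.norm_cpow_eq_rpow_re_of_pos hn0]
        apply Real.one_le_rpow (by exact_mod_cast hn1)
        have : ((2:ℂ)*μ - 1).re = 2*μ.re - 1 := by simp
        rw [this]; linarith
      calc ‖L‖/2 ≤ ‖R n‖ := le_of_lt hRn
        _ = 1 * ‖R n‖ := (one_mul _).symm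
        _ ≤ ‖(n:ℂ) ^ ((2:ℂ)*μ - 1)‖ * ‖R n‖ :=
            mul_le_mul_of_nonneg_right hnpow (norm_nonneg _)
    have hfn : ‖f (n + (m+1))‖ = ‖K‖ * ‖Q (n+1)‖ * ‖Complex.cos (α + n * ((2*θ:ℝ):ℂ))‖ := by
      rw [ht, norm_mul, norm_mul]
    rw [hfn]
    have hcn : 0 ≤ ‖Complex.cos (α + n * ((2*θ:ℝ):ℂ))‖ := norm_nonneg _
    rw [real_calc (ne_of_gt hKpos) (ne_of_gt hLpos)]
    exact le_mul_of_one_le_left hcn (one_le_aux hLpos hQn)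
  exact cos_not_tendsto α (2*θ) hsin2 hcos
end

section
/- Let θ ∈ (0, π), and ν, μ ∈ ℂ with ν + μ ∉ −ℕ and Re μ < 0. Then the series ∑_{k=0}^∞ (Γ(ν+μ+k+1)/Γ(ν+k+3/2))·((μ+1/2)_k/k!)·cos((ν+μ+2k+1)θ) converges absolutely. -/
open Filter Finset Topology

private lemma gamma_prod (z : ℂ) (h : ∀ j : ℕ, z + j ≠ 0) (n : ℕ) :
    Complex.Gamma (z + n) = Complex.Gamma z * ∏ j ∈ Finset.range n, (z + j) := by
  induction n with
  | zero => simp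
  | succ n ih =>
      have e : z + (n + 1 : ℕ) = (z + n) + 1 := by push_cast; ring
      rw [e, Complex.Gamma_add_one _ (h n), Finset.prod_range_succ, ih]
      ring

private lemma tendsto_P (z : ℂ) (h : ∀ j : ℕ, z + j ≠ 0) :
    Tendsto (fun n : ℕ => ‖∏ j ∈ Finset.range (n+1), (z + j)‖ / (n.factorial * (n:ℝ) ^ z.re))
      atTop (nhds ‖Complex.Gamma z‖⁻¹) := by
  have hΓ : Complex.Gamma z ≠ 0 := by
    rw [Ne, Complex.Gamma_eq_zero_iff]
    rintro ⟨m, rfl⟩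
    exact h m (by ring)
  have h1 : Tendsto (fun n => ‖(Complex.GammaSeq z n)⁻¹‖) atTop (𝓝 ‖(Complex.Gamma z)⁻¹‖) :=
    ((Complex.GammaSeq_tendsto_Gamma z).inv₀ hΓ).norm
  rw [norm_inv] at h1
  refine h1.congr' ?_
  filter_upwards [eventually_ge_atTop 1] with n hn
  rw [Complex.GammaSeq, inv_div, norm_div, norm_mul, Complex.norm_natCast_cpow_of_pos hn,
    Complex.norm_natCast, mul_comm]

private lemma fact_aux (q m : ℕ) : (q + m).factorial ≤ q.factorial * (q + m) ^ m := by
  induction m with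
  | zero => simp
  | succ m ih =>
      have : (q + (m+1)).factorial = (q + m + 1) * (q + m).factorial := by
        rw [← Nat.add_assoc, Nat.factorial_succ]
      rw [this, pow_succ]
      calc (q + m + 1) * (q + m).factorial ≤ (q + m + 1) * (q.factorial * (q + m) ^ m) :=
            Nat.mul_le_mul_left _ ih
        _ ≤ (q + m + 1) * (q.factorial * (q + (m+1)) ^ m) := by
            refine Nat.mul_le_mul_left _ (Nat.mul_le_mul_left _ (Nat.pow_le_pow_left ?_ m))
            omega
        _ = q.factorial * ((q + (m + 1)) ^ m * (q + (m + 1))) := by ring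

private lemma norm_cos_le' (w : ℂ) : ‖Complex.cos w‖ ≤ Real.exp |w.im| := by
  rw [Complex.cos, norm_div]
  have h1 : ‖Complex.exp (w * Complex.I) + Complex.exp (-w * Complex.I)‖ ≤
      Real.exp |w.im| + Real.exp |w.im| := by
    refine (norm_add_le _ _).trans (add_le_add ?_ ?_) <;>
    · rw [Complex.norm_exp]
      refine Real.exp_le_exp.mpr ?_
      simp only [Complex.mul_re, Complex.I_re, Complex.I_im, Complex.neg_re, Complex.neg_im,
        mul_zero, mul_one, zero_sub, neg_neg, zero_mul, sub_zero, zero_add, neg_zero]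
      first
        | exact neg_le_abs _
        | exact le_abs_self _
  have h2 : ‖(2:ℂ)‖ = (2:ℝ) := by norm_num
  rw [h2]
  linarith

private lemma upper (z : ℂ) (h : ∀ j : ℕ, z + j ≠ 0) :
    ∀ᶠ n : ℕ in atTop, ‖Complex.Gamma (z + ((n+1 : ℕ) : ℂ))‖ ≤
      ‖Complex.Gamma z‖ * (‖Complex.Gamma z‖⁻¹ + 1) * (n.factorial * (n:ℝ) ^ z.re) := by
  have ht := tendsto_P z h
  filter_upwards [ht.eventually_lt_const (lt_add_of_pos_right _ one_pos),
    eventually_ge_atTop 1] with n h1 hn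
  have hn0 : (0:ℝ) < (n:ℝ) := by exact_mod_cast hn
  have hF : (0:ℝ) < (n.factorial : ℝ) * (n:ℝ) ^ z.re :=
    mul_pos (by exact_mod_cast n.factorial_pos) (Real.rpow_pos_of_pos hn0 _)
  rw [gamma_prod z h (n+1), norm_mul, mul_assoc]
  rw [div_lt_iff₀ hF] at h1
  exact mul_le_mul_of_nonneg_left h1.le (norm_nonneg _)

private lemma lowerB (b : ℂ) :
    ∃ δ : ℝ, 0 < δ ∧ ∀ᶠ n : ℕ in atTop,
      δ * (n.factorial * (n:ℝ) ^ b.re) ≤ ‖Complex.Gamma (b + ((n+1 : ℕ) : ℂ))‖ := by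
  by_cases hb : ∃ m : ℕ, b = -m
  · obtain ⟨m, rfl⟩ := hb
    refine ⟨1, one_pos, ?_⟩
    filter_upwards [eventually_ge_atTop (max 1 m)] with n hn
    have hn1 : 1 ≤ n := le_trans (le_max_left _ _) hn
    have hnm : m ≤ n := le_trans (le_max_right _ _) hn
    obtain ⟨q, rfl⟩ : ∃ q, n = q + m := ⟨n - m, by omega⟩
    have harg : -(m:ℂ) + ((q + m + 1 : ℕ) : ℂ) = ((q:ℕ) : ℂ) + 1 := by push_cast; ring
    have hbre : (-(m:ℂ)).re = -(m:ℝ) := by simp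
    rw [harg, Complex.Gamma_nat_eq_factorial, hbre, one_mul,
      Real.rpow_neg (by positivity), Real.rpow_natCast]
    have hfact := fact_aux q m
    have hpos : (0:ℝ) < ((q+m : ℕ):ℝ) ^ m := by
      have : (0:ℝ) < ((q+m : ℕ):ℝ) := by exact_mod_cast hn1
      positivity
    rw [Complex.norm_natCast]
    rw [mul_inv_le_iff₀ hpos]
    calc ((q+m).factorial : ℝ) ≤ (q.factorial : ℝ) * ((q+m : ℕ):ℝ) ^ m := by exact_mod_cast hfact
      _ = _ := by push_cast; ring
  · have hbj : ∀ j : ℕ, b + j ≠ 0 := fun j hj => hb ⟨j, by linear_combination hj⟩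
    have hΓb : Complex.Gamma b ≠ 0 := by
      rw [Ne, Complex.Gamma_eq_zero_iff]
      exact hb
    have hΓbpos : (0:ℝ) < ‖Complex.Gamma b‖ := norm_pos_iff.mpr hΓb
    refine ⟨‖Complex.Gamma b‖ * (‖Complex.Gamma b‖⁻¹ / 2), by positivity, ?_⟩
    have ht := tendsto_P b hbj
    filter_upwards [ht.eventually_const_lt (half_lt_self (inv_pos.mpr hΓbpos)),
      eventually_ge_atTop 1] with n h1 hn
    have hn0 : (0:ℝ) < (n:ℝ) := by exact_mod_cast hn
    have hF : (0:ℝ) < (n.factorial : ℝ) * (n:ℝ) ^ b.re :=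
      mul_pos (by exact_mod_cast n.factorial_pos) (Real.rpow_pos_of_pos hn0 _)
    rw [gamma_prod b hbj (n+1), norm_mul, mul_assoc]
    rw [lt_div_iff₀ hF] at h1
    exact mul_le_mul_of_nonneg_left h1.le (norm_nonneg _)

set_option maxHeartbeats 1000000

theorem fourier_series_abs_convergent (θ : ℝ) (hθ0 : 0 < θ) (hθπ : θ < Real.pi)
    (ν μ : ℂ) (hνμ : ∀ n : ℕ, ν + μ ≠ -(n + 1 : ℂ)) (hμ : μ.re < 0) :
    Summable (fun k : ℕ =>
      ‖Complex.Gamma (ν + μ + k + 1) / Complex.Gamma (ν + k + 3 / 2) *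
        (Complex.Gamma (μ + 1 / 2 + k) / Complex.Gamma (μ + 1 / 2) / (Nat.factorial k : ℂ)) *
        Complex.cos ((ν + μ + 2 * k + 1) * (θ : ℂ))‖) := by
  by_cases hc0 : Complex.Gamma (μ + 1 / 2) = 0
  · have hz : (fun k : ℕ =>
        ‖Complex.Gamma (ν + μ + k + 1) / Complex.Gamma (ν + k + 3 / 2) *
          (Complex.Gamma (μ + 1 / 2 + k) / Complex.Gamma (μ + 1 / 2) / (Nat.factorial k : ℂ)) *
          Complex.cos ((ν + μ + 2 * k + 1) * (θ : ℂ))‖) = fun _ => (0:ℝ) := by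
      funext k
      rw [hc0]
      simp
    rw [hz]
    exact summable_zero
  set a := ν + μ + 1 with ha_def
  set b := ν + 3/2 with hb_def
  set c := μ + 1/2 with hc_def
  have haj : ∀ j : ℕ, a + j ≠ 0 := by
    intro j hj
    exact hνμ j (by rw [ha_def] at hj; linear_combination hj)
  have hcj : ∀ j : ℕ, c + j ≠ 0 := by
    intro j hj
    exact hc0 (by rw [Complex.Gamma_eq_zero_iff]; exact ⟨j, by linear_combination hj⟩)
  have hΓcpos : (0:ℝ) < ‖Complex.Gamma c‖ := norm_pos_iff.mpr hc0
  obtain ⟨δ, hδ, hB⟩ := lowerB b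
  have hA := upper a haj
  have hC := upper c hcj
  set Ca := ‖Complex.Gamma a‖ * (‖Complex.Gamma a‖⁻¹ + 1) with hCa_def
  set Cc := ‖Complex.Gamma c‖ * (‖Complex.Gamma c‖⁻¹ + 1) with hCc_def
  set Co := Real.exp |(ν.im + μ.im) * θ| with hCo_def
  have hCa : (0:ℝ) < Ca := by
    have := norm_pos_iff.mpr (by rw [Ne, Complex.Gamma_eq_zero_iff]
                                 rintro ⟨m, hm⟩; exact haj m (by rw [hm]; ring) :
      Complex.Gamma a ≠ 0)
    positivity
  have hCc : (0:ℝ) < Cc := by positivity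
  have hCo : (0:ℝ) < Co := Real.exp_pos _
  set C := Ca * Cc * Co / (δ * ‖Complex.Gamma c‖) with hC_def
  set p := 2 * μ.re - 1 with hp_def
  have hcos : ∀ k : ℕ, ‖Complex.cos ((ν + μ + 2 * (k:ℂ) + 1) * (θ : ℂ))‖ ≤ Co := by
    intro k
    refine (norm_cos_le' _).trans_eq ?_
    rw [hCo_def]
    congr 1
    congr 1
    simp [Complex.mul_im, Complex.add_im, Complex.add_re]
  rw [← summable_nat_add_iff 1]
  refine Summable.of_norm_bounded_eventually_nat (g := fun n => C * (n:ℝ) ^ p) 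
    ((Real.summable_nat_rpow.mpr (by rw [hp_def]; linarith)).mul_left C) ?_
  filter_upwards [hA, hB, hC, eventually_ge_atTop 1] with n hAn hBn hCn hn
  have hn0 : (0:ℝ) < (n:ℝ) := by exact_mod_cast hn
  rw [norm_norm]
  have e1 : ν + μ + ((n+1:ℕ):ℂ) + 1 = a + ((n+1:ℕ):ℂ) := by rw [ha_def]; ring
  have e2 : ν + ((n+1:ℕ):ℂ) + 3/2 = b + ((n+1:ℕ):ℂ) := by rw [hb_def]; ring
  have e3 : μ + 1/2 + ((n+1:ℕ):ℂ) = c + ((n+1:ℕ):ℂ) := by rw [hc_def]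
  rw [e1, e2, e3]
  set A1 := ‖Complex.Gamma (a + ((n+1:ℕ):ℂ))‖
  set B1 := ‖Complex.Gamma (b + ((n+1:ℕ):ℂ))‖
  set C1 := ‖Complex.Gamma (c + ((n+1:ℕ):ℂ))‖
  set G := ‖Complex.Gamma c‖
  set F1 := ((n.factorial : ℝ)) with hF1_def
  set F2 := (((n+1).factorial : ℝ)) with hF2_def
  set x := (n:ℝ) ^ a.re
  set y := (n:ℝ) ^ c.re
  set zb := (n:ℝ) ^ b.re
  have hnorm : ‖Complex.Gamma (a + ((n+1:ℕ):ℂ)) / Complex.Gamma (b + ((n+1:ℕ):ℂ)) *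
      (Complex.Gamma (c + ((n+1:ℕ):ℂ)) / Complex.Gamma c / ((n+1).factorial : ℂ)) *
      Complex.cos ((ν + μ + 2 * ((n+1:ℕ):ℂ) + 1) * (θ : ℂ))‖ =
      A1 * C1 * ‖Complex.cos ((ν + μ + 2 * ((n+1:ℕ):ℂ) + 1) * (θ : ℂ))‖ / (B1 * G * F2) := by
    simp only [norm_mul, norm_div, Complex.norm_natCast]
    ring
  rw [hnorm]
  have hFpos : (0:ℝ) < F1 := by rw [hF1_def]; exact_mod_cast n.factorial_pos
  have hF2pos : (0:ℝ) < F2 := by rw [hF2_def]; exact_mod_cast (n+1).factorial_pos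
  have hzb : (0:ℝ) < zb := Real.rpow_pos_of_pos hn0 _
  have hx : (0:ℝ) < x := Real.rpow_pos_of_pos hn0 _
  have hy : (0:ℝ) < y := Real.rpow_pos_of_pos hn0 _
  have step1 : A1 * C1 * ‖Complex.cos ((ν + μ + 2 * ((n+1:ℕ):ℂ) + 1) * (θ : ℂ))‖ / (B1 * G * F2)
      ≤ (Ca * (F1 * x)) * (Cc * (F1 * y)) * Co / (δ * (F1 * zb) * G * F2) := by
    refine div_le_div₀ (by positivity) ?_ (by positivity) ?_
    · have := hcos (n+1)
      push_cast at this ⊢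
      gcongr <;> positivity
    · gcongr
  refine step1.trans ?_
  have hre : a.re + c.re = b.re + (1 + p) := by
    rw [ha_def, hb_def, hc_def, hp_def]
    simp [Complex.add_re]
    norm_num
    ring
  have hxy : x * y = zb * ((n:ℝ) * (n:ℝ) ^ p) := by
    have hstep : (n:ℝ) * (n:ℝ) ^ p = (n:ℝ) ^ (1 + p) := by
      rw [Real.rpow_add hn0, Real.rpow_one]
    rw [hstep, ← Real.rpow_add hn0, ← Real.rpow_add hn0, hre]
  have hF2eq : F2 = ((n:ℝ) + 1) * F1 := by
    rw [hF1_def, hF2_def, Nat.factorial_succ]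
    push_cast
    ring
  have heq : (Ca * (F1 * x)) * (Cc * (F1 * y)) * Co / (δ * (F1 * zb) * G * F2) =
      (Ca * Cc * Co / (δ * G)) * ((x * y) / zb) * (F1 * F1 / (F1 * F2)) := by ring
  rw [heq, hxy]
  have h1 : (zb * ((n:ℝ) * (n:ℝ) ^ p)) / zb = (n:ℝ) * (n:ℝ) ^ p := by
    field_simp
  have h2 : F1 * F1 / (F1 * F2) = 1 / ((n:ℝ) + 1) := by
    rw [hF2eq]
    field_simp
  rw [h1, h2, hC_def]
  have hrp : (0:ℝ) < (n:ℝ) ^ p := Real.rpow_pos_of_pos hn0 _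
  have hK : (0:ℝ) < Ca * Cc * Co / (δ * G) :=
    div_pos (mul_pos (mul_pos hCa hCc) hCo) (mul_pos hδ hΓcpos)
  have key : (n:ℝ) * (n:ℝ) ^ p * (1 / ((n:ℝ) + 1)) ≤ (n:ℝ) ^ p := by
    rw [mul_one_div, div_le_iff₀ (by positivity)]
    rw [mul_comm ((n:ℝ) ^ p) ((n:ℝ) + 1)]
    exact mul_le_mul_of_nonneg_right (lt_add_one _).le hrp.le
  rw [mul_assoc]
  exact mul_le_mul_of_nonneg_left key hK.le
end
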